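/- arXiv:1001.0330 — 6 statements merged into one kernel-verified Lean document; each statement's English description precedes it below -/
import Mathlib

section
/- There exists a constant c > 0 such that for every finite simple graph G with at least one edge, re(G) ≥ c·√(Δ(G)), where Δ(G) is the maximum vertex degree of G. -/
open Real

noncomputable section

/-- The Euclidean plane. -/
abbrev Pt := EuclideanSpace ℝ (Fin 2)

variable {V : Type*} [Fintype V]

/-- A representation is non-edge-degenerate if endpoints of every edge are mapped
to distinct points. -/
def NED (G : SimpleGraph V) (ρ : V → Pt) : Prop := ∀ ⦃u v⦄, G.Adj u v → ρ u ≠ ρ v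

/-- Maximum edge length of a representation. -/
def maxE (G : SimpleGraph V) (ρ : V → Pt) : ℝ :=
  sSup {d | ∃ u v, G.Adj u v ∧ d = dist (ρ u) (ρ v)}

/-- Minimum edge length of a representation. -/
def minE (G : SimpleGraph V) (ρ : V → Pt) : ℝ :=
  sInf {d | ∃ u v, G.Adj u v ∧ d = dist (ρ u) (ρ v)}

/-- Maximum distance between images of two distinct vertices. -/
def maxP (ρ : V → Pt) : ℝ := sSup {d | ∃ u v : V, u ≠ v ∧ d = dist (ρ u) (ρ v)}

/-- Minimum distance between images of two distinct vertices. -/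
def minP (ρ : V → Pt) : ℝ := sInf {d | ∃ u v : V, u ≠ v ∧ d = dist (ρ u) (ρ v)}

/-- The dilation coefficient of a graph. -/
def dc (G : SimpleGraph V) : ℝ :=
  sInf {r | ∃ ρ : V → Pt, NED G ρ ∧ r = maxE G ρ / minE G ρ}

/-- The plane-width of a graph. -/
def pw (G : SimpleGraph V) : ℝ :=
  sInf {r | ∃ ρ : V → Pt, NED G ρ ∧ r = maxP ρ / minE G ρ}

/-- The resolution coefficient of a graph. -/
def re (G : SimpleGraph V) : ℝ :=
  sInf {r | ∃ ρ : V → Pt, Function.Injective ρ ∧ r = maxE G ρ / minP ρ}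

open MeasureTheory in
/-- Volume of a ball in the plane. -/
lemma vol_ball_plane (x : Pt) (r : ℝ) :
    volume (Metric.ball x r) = ENNReal.ofReal r ^ 2 * ENNReal.ofReal π := by
  rw [EuclideanSpace.volume_ball]
  rw [Fintype.card_fin]
  congr 1
  rw [show (((2:ℕ):ℝ)/2 + 1) = 2 by norm_num, Real.Gamma_two, div_one,
    Real.sq_sqrt Real.pi_pos.le]

open MeasureTheory ENNReal in
/-- Packing lemma: if the points `p a`, `a ∈ t`, are pairwise at distance at least `s > 0`
and all within distance `R` of `x`, then `|t| (s/2)² ≤ (R + s/2)²`. -/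
lemma packing {ι : Type*} (t : Finset ι) (p : ι → Pt) (x : Pt) (s R : ℝ) (hs : 0 < s)
    (hd : ∀ a ∈ t, ∀ b ∈ t, a ≠ b → s ≤ dist (p a) (p b))
    (hR : ∀ a ∈ t, dist (p a) x ≤ R) :
    (t.card : ℝ) * (s / 2) ^ 2 ≤ (R + s / 2) ^ 2 := by
  rcases t.eq_empty_or_nonempty with rfl | ⟨a0, ha0⟩
  · simpa using sq_nonneg (R + s / 2)
  have hR0 : 0 ≤ R := le_trans dist_nonneg (hR a0 ha0)
  have hdisj : (↑t : Set ι).PairwiseDisjoint (fun a => Metric.ball (p a) (s / 2)) := by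
    intro a ha b hb hab
    exact Metric.ball_disjoint_ball (by linarith [hd a ha b hb hab])
  have hsub : (⋃ a ∈ t, Metric.ball (p a) (s / 2)) ⊆ Metric.ball x (R + s / 2) := by
    intro y hy
    simp only [Set.mem_iUnion] at hy
    obtain ⟨a, ha, hya⟩ := hy
    rw [Metric.mem_ball] at hya ⊢
    calc dist y x ≤ dist y (p a) + dist (p a) x := dist_triangle _ _ _
      _ < s / 2 + R := add_lt_add_of_lt_of_le hya (hR a ha)
      _ = R + s / 2 := by ring
  have hvol : (t.card : ℝ≥0∞) * volume (Metric.ball (p a0) (s / 2))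
      ≤ volume (Metric.ball x (R + s / 2)) := by
    have h1 := measure_biUnion_finset (μ := volume) hdisj (fun a _ => measurableSet_ball)
    have h2 : ∀ a ∈ t, volume (Metric.ball (p a) (s / 2))
        = volume (Metric.ball (p a0) (s / 2)) := by
      intro a _; rw [vol_ball_plane, vol_ball_plane]
    calc (t.card : ℝ≥0∞) * volume (Metric.ball (p a0) (s / 2))
        = ∑ a ∈ t, volume (Metric.ball (p a) (s / 2)) := by
          rw [Finset.sum_congr rfl h2, Finset.sum_const, nsmul_eq_mul]
      _ = volume (⋃ a ∈ t, Metric.ball (p a) (s / 2)) := h1.symm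
      _ ≤ _ := measure_mono hsub
  rw [vol_ball_plane, vol_ball_plane] at hvol
  rw [← mul_assoc] at hvol
  have hπ : ENNReal.ofReal π ≠ 0 := by
    simp [Real.pi_pos, ENNReal.ofReal_pos.mpr Real.pi_pos, ne_of_gt]
  have hvol2 : (t.card : ℝ≥0∞) * ENNReal.ofReal (s / 2) ^ 2
      ≤ ENNReal.ofReal (R + s / 2) ^ 2 :=
    (ENNReal.mul_le_mul_iff_left hπ ENNReal.ofReal_ne_top).mp (by simpa [mul_assoc] using hvol)
  have hs2 : (0:ℝ) ≤ s / 2 := by linarith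
  have hRs : (0:ℝ) ≤ R + s / 2 := by linarith
  rw [← ENNReal.ofReal_pow hs2, ← ENNReal.ofReal_pow hRs, ← ENNReal.ofReal_natCast,
    ← ENNReal.ofReal_mul (by positivity)] at hvol2
  exact (ENNReal.ofReal_le_ofReal_iff (by positivity)).mp hvol2

/-- There is a constant `c > 0` such that every finite simple graph with at least
one edge satisfies `re G ≥ c·√(Δ(G))`. -/
theorem stmt_6 : ∃ c : ℝ, 0 < c ∧
    ∀ (V : Type) [Fintype V] (G : SimpleGraph V) [DecidableRel G.Adj],
      G.edgeSet.Nonempty → c * Real.sqrt (G.maxDegree) ≤ re G := by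
  refine ⟨1/3, by norm_num, ?_⟩
  intro V _ G _ hE
  obtain ⟨e, he⟩ := hE
  induction e with
  | _ u0 v0 =>
  rw [SimpleGraph.mem_edgeSet] at he
  have hne : Nonempty V := ⟨u0⟩
  apply le_csInf
  · -- the defining set of `re` is nonempty: an injective map exists
    classical
    refine ⟨_, fun v => (WithLp.toLp 2 (fun i : Fin 2 => if i = 0 then ((Fintype.equivFin V v : ℕ) : ℝ) else 0) : Pt),
      ?_, rfl⟩
    intro a b hab
    have h0 := congrArg (fun x : Pt => x 0) hab
    simp only [PiLp.toLp_apply, if_pos] at h0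
    have h1 : ((Fintype.equivFin V) a : ℕ) = ((Fintype.equivFin V) b : ℕ) := by
      exact_mod_cast h0
    exact (Fintype.equivFin V).injective (Fin.val_injective h1)
  · rintro r ⟨ρ, hρ, rfl⟩
    set R := maxE G ρ with hRdef
    set s := minP ρ with hsdef
    -- basic facts about the distance sets
    have hfinE : {d | ∃ u v, G.Adj u v ∧ d = dist (ρ u) (ρ v)}.Finite := by
      apply Set.Finite.subset (Set.finite_range fun p : V × V => dist (ρ p.1) (ρ p.2))
      rintro d ⟨u, v, _, rfl⟩; exact ⟨(u, v), rfl⟩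
    have hfinP : {d | ∃ u v : V, u ≠ v ∧ d = dist (ρ u) (ρ v)}.Finite := by
      apply Set.Finite.subset (Set.finite_range fun p : V × V => dist (ρ p.1) (ρ p.2))
      rintro d ⟨u, v, _, rfl⟩; exact ⟨(u, v), rfl⟩
    have hPne : {d | ∃ u v : V, u ≠ v ∧ d = dist (ρ u) (ρ v)}.Nonempty :=
      ⟨_, u0, v0, he.ne, rfl⟩
    have hbddP : BddBelow {d | ∃ u v : V, u ≠ v ∧ d = dist (ρ u) (ρ v)} :=
      ⟨0, by rintro d ⟨u, v, _, rfl⟩; exact dist_nonneg⟩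
    have hs_pos : 0 < s := by
      obtain ⟨u, v, huv, hd⟩ := hPne.csInf_mem hfinP
      rw [hsdef, minP, hd]
      exact dist_pos.mpr fun h => huv (hρ h)
    have hs_le : ∀ u v : V, u ≠ v → s ≤ dist (ρ u) (ρ v) := fun u v huv =>
      csInf_le hbddP ⟨u, v, huv, rfl⟩
    have hE_le : ∀ u v : V, G.Adj u v → dist (ρ u) (ρ v) ≤ R := fun u v huv =>
      le_csSup hfinE.bddAbove ⟨u, v, huv, rfl⟩
    have hsR : s ≤ R := le_trans (hs_le u0 v0 he.ne) (hE_le u0 v0 he)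
    -- packing around a vertex of maximum degree
    obtain ⟨u, hu⟩ := G.exists_maximal_degree_vertex
    have hpack := packing (G.neighborFinset u) ρ (ρ u) s R hs_pos
      (fun a ha b hb hab => hs_le a b hab)
      (fun a ha => by
        rw [dist_comm]
        exact hE_le u a ((SimpleGraph.mem_neighborFinset G u a).mp ha))
    rw [G.card_neighborFinset_eq_degree, ← hu] at hpack
    -- arithmetic
    have hΔ0 : (0:ℝ) ≤ (G.maxDegree : ℝ) := Nat.cast_nonneg _
    have h9 : (G.maxDegree : ℝ) * s ^ 2 ≤ (3 * R) ^ 2 := by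
      nlinarith [hpack, hs_pos, hsR, hΔ0]
    have key : Real.sqrt (G.maxDegree) * s ≤ 3 * R := by
      calc Real.sqrt (G.maxDegree) * s = Real.sqrt ((G.maxDegree : ℝ) * s ^ 2) := by
            rw [Real.sqrt_mul hΔ0, Real.sqrt_sq hs_pos.le]
        _ ≤ Real.sqrt ((3 * R) ^ 2) := Real.sqrt_le_sqrt h9
        _ = 3 * R := Real.sqrt_sq (by linarith)
    rw [le_div_iff₀ hs_pos]
    nlinarith [key]
end
end

section
/- For every R > 0 there exists a graph G of maximum degree at most 3 whose resolution coefficient exceeds R; that is, the resolution coefficient is unbounded on graphs of maximum degree 3. -/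
open Real

noncomputable section

variable {V : Type*} [Fintype V]

lemma coord_le_dist (x y : Pt) (j : Fin 2) : |x j - y j| ≤ dist x y := by
  have h : dist (x j) (y j) ^ 2 ≤ dist x y ^ 2 := by
    rw [EuclideanSpace.dist_eq, Real.sq_sqrt (by positivity)]
    exact Finset.single_le_sum (f := fun i => dist (x i) (y i) ^ 2)
      (fun i _ => by positivity) (Finset.mem_univ j)
  have h2 : dist (x j) (y j) ≤ dist x y := by
    nlinarith [dist_nonneg (x := x) (y := y), dist_nonneg (x := x j) (y := y j)]
  simpa [Real.dist_eq] using h2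

lemma floor_range {c y t : ℝ} (h : |y - c| ≤ t) : ⌊y⌋ ∈ Finset.Icc ⌊c - t⌋ ⌊c + t⌋ := by
  rw [abs_le] at h
  exact Finset.mem_Icc.2 ⟨Int.floor_mono (by linarith [h.1]), Int.floor_mono (by linarith [h.2])⟩

lemma grid_count {N : ℕ} (x : Fin N → Pt) (m D : ℝ) (v0 : Fin N)
    (hm : 0 < m) (hD : 0 ≤ D)
    (hsep : ∀ i j : Fin N, i ≠ j → m ≤ dist (x i) (x j))
    (hball : ∀ i, dist (x i) (x v0) ≤ D) :
    (N : ℝ) ≤ (4 * D / m + 3) ^ 2 := by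
  set φ : Fin N → ℤ × ℤ := fun i => (⌊2 * x i 0 / m⌋, ⌊2 * x i 1 / m⌋) with hφ
  -- injectivity
  have hinj : Function.Injective φ := by
    intro i j hij
    by_contra hne
    have h0 : |2 * x i 0 / m - 2 * x j 0 / m| < 1 :=
      Int.abs_sub_lt_one_of_floor_eq_floor (congrArg Prod.fst hij)
    have h1 : |2 * x i 1 / m - 2 * x j 1 / m| < 1 :=
      Int.abs_sub_lt_one_of_floor_eq_floor (congrArg Prod.snd hij)
    rw [show 2 * x i 0 / m - 2 * x j 0 / m = (2 * x i 0 - 2 * x j 0) / m from (sub_div _ _ _).symm,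
      abs_div, abs_of_pos hm, div_lt_one hm] at h0
    rw [show 2 * x i 1 / m - 2 * x j 1 / m = (2 * x i 1 - 2 * x j 1) / m from (sub_div _ _ _).symm,
      abs_div, abs_of_pos hm, div_lt_one hm] at h1
    have e0 : |x i 0 - x j 0| < m / 2 := by
      rw [abs_lt] at h0 ⊢; constructor <;> [linarith [h0.1]; linarith [h0.2]]
    have e1 : |x i 1 - x j 1| < m / 2 := by
      rw [abs_lt] at h1 ⊢; constructor <;> [linarith [h1.1]; linarith [h1.2]]
    have hd : dist (x i) (x j) ^ 2 = |x i 0 - x j 0| ^ 2 + |x i 1 - x j 1| ^ 2 := by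
      rw [EuclideanSpace.dist_eq, Real.sq_sqrt (by positivity), Fin.sum_univ_two]
      simp [Real.dist_eq, sq_abs]
    have hsep' := hsep i j hne
    nlinarith [abs_nonneg (x i 0 - x j 0), abs_nonneg (x i 1 - x j 1)]
  -- range
  have hcoord : ∀ i (j : Fin 2), |x i j - x v0 j| ≤ D := fun i j =>
    le_trans (coord_le_dist (x i) (x v0) j) (hball i)
  set c0 : ℝ := 2 * x v0 0 / m with hc0
  set c1 : ℝ := 2 * x v0 1 / m with hc1
  set t : ℝ := 2 * D / m with ht
  have habs : ∀ i (j : Fin 2) c, c = 2 * x v0 j / m → |2 * x i j / m - c| ≤ t := by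
    intro i j c hc
    have hb := hcoord i j
    rw [abs_le] at hb
    rw [hc, show 2 * x i j / m - 2 * x v0 j / m = (2 * x i j - 2 * x v0 j) / m from
      (sub_div _ _ _).symm, ht, abs_div, abs_of_pos hm]
    gcongr ?_ / m
    rw [abs_le]; constructor <;> linarith [hb.1, hb.2]
  have hmem : ∀ i, φ i ∈ Finset.Icc ⌊c0 - t⌋ ⌊c0 + t⌋ ×ˢ Finset.Icc ⌊c1 - t⌋ ⌊c1 + t⌋ := by
    intro i
    exact Finset.mem_product.2 ⟨floor_range (habs i 0 c0 hc0), floor_range (habs i 1 c1 hc1)⟩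
  have hcard : N ≤ ((Finset.Icc ⌊c0 - t⌋ ⌊c0 + t⌋ ×ˢ Finset.Icc ⌊c1 - t⌋ ⌊c1 + t⌋)).card := by
    have := Finset.card_le_card_of_injOn (s := Finset.univ) φ (fun a _ => hmem a) (hinj.injOn)
    simpa using this
  have hIcc : ∀ c : ℝ, ((Finset.Icc ⌊c - t⌋ ⌊c + t⌋).card : ℝ) ≤ 2 * t + 2 := by
    intro c
    rw [Int.card_Icc]
    have h1 : (⌊c + t⌋ + 1 - ⌊c - t⌋ : ℤ) ≤ 2 * t + 2 := by
      have a1 : (⌊c + t⌋ : ℝ) ≤ c + t := Int.floor_le _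
      have a2 : c - t - 1 < ⌊c - t⌋ := by linarith [Int.lt_floor_add_one (c - t)]
      push_cast
      linarith
    rcases le_or_gt (⌊c + t⌋ + 1 - ⌊c - t⌋ : ℤ) 0 with h | h
    · rw [Int.toNat_of_nonpos h]
      have : (0:ℝ) ≤ 2 * t + 2 := by positivity
      simpa using this
    · rw [← Int.cast_natCast (R := ℝ), Int.toNat_of_nonneg h.le]
      exact h1
  have hfin : (N : ℝ) ≤ (2 * t + 2) * (2 * t + 2) := by
    have hcards : ((Finset.Icc ⌊c0 - t⌋ ⌊c0 + t⌋ ×ˢ Finset.Icc ⌊c1 - t⌋ ⌊c1 + t⌋).card : ℝ)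
        = ((Finset.Icc ⌊c0 - t⌋ ⌊c0 + t⌋).card : ℝ) * ((Finset.Icc ⌊c1 - t⌋ ⌊c1 + t⌋).card : ℝ) := by
      rw [Finset.card_product]; push_cast; ring
    calc (N : ℝ) ≤ _ := by exact_mod_cast hcard
    _ = _ := hcards
    _ ≤ (2 * t + 2) * (2 * t + 2) := by
        apply mul_le_mul (hIcc c0) (hIcc c1) (by positivity) (by positivity)
  have htv : 0 ≤ t := by rw [ht]; positivity
  calc (N:ℝ) ≤ (2 * t + 2) * (2 * t + 2) := hfin
  _ ≤ (4 * D / m + 3) ^ 2 := by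
      have hs : (0:ℝ) ≤ D / m := div_nonneg hD hm.le
      rw [ht]
      have : 2 * (2 * D / m) + 2 = 4 * (D / m) + 2 := by ring
      rw [this, show 4 * D / m + 3 = 4 * (D / m) + 3 from by ring]
      nlinarith [hs]

/-- For every `R > 0` there is a graph of maximum degree at most `3` (and with at
least one edge) whose resolution coefficient exceeds `R`. -/
theorem stmt_7 : ∀ R : ℝ, 0 < R → ∃ (N : ℕ) (G : SimpleGraph (Fin N)),
    G.edgeSet.Nonempty ∧ (∀ v, (G.neighborSet v).ncard ≤ 3) ∧ R < re G := by
  intro R hR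
  obtain ⟨f, hf⟩ := exists_nat_ge (16 * R + 8)
  have hf1 : 1 ≤ f := by
    rcases Nat.eq_zero_or_pos f with h | h
    · subst h; simp at hf; linarith
    · exact h
  set e := 2 * f with he
  set N := 2 ^ (2 * e + 1) - 1 with hN
  have hNpow : 2 ^ (2 * e + 1) = N + 1 := by
    have : 1 ≤ 2 ^ (2 * e + 1) := Nat.one_le_two_pow
    omega
  have hN1 : 1 < N := by
    have h4 : (4 : ℕ) ≤ 2 ^ (2 * e + 1) := by
      calc (4 : ℕ) = 2 ^ 2 := rfl
      _ ≤ 2 ^ (2 * e + 1) := Nat.pow_le_pow_right (by norm_num) (by omega)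
    omega
  have hN0 : 0 < N := by omega
  set G : SimpleGraph (Fin N) :=
    SimpleGraph.fromRel (fun a b => (a : ℕ) = ((b : ℕ) - 1) / 2 ∧ (b : ℕ) ≠ 0) with hG
  let vz : Fin N := ⟨0, hN0⟩
  let v1 : Fin N := ⟨1, hN1⟩
  have hadj_parent : ∀ i : Fin N, (i : ℕ) ≠ 0 → ∀ (h : ((i : ℕ) - 1) / 2 < N),
      G.Adj ⟨((i : ℕ) - 1) / 2, h⟩ i := by
    intro i hi h
    rw [hG, SimpleGraph.fromRel_adj]
    refine ⟨?_, Or.inl ⟨rfl, hi⟩⟩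
    intro hEq
    apply_fun Fin.val at hEq
    simp only at hEq
    omega
  have hedge : G.Adj vz v1 := by
    rw [hG, SimpleGraph.fromRel_adj]
    refine ⟨?_, Or.inl ⟨by simp [vz, v1], by simp [v1]⟩⟩
    intro hEq
    apply_fun Fin.val at hEq
    simp [vz, v1] at hEq
  -- degree bound
  have hdeg : ∀ v : Fin N, (G.neighborSet v).ncard ≤ 3 := by
    intro v
    classical
    set a : Fin N := if h : ((v : ℕ) - 1) / 2 < N then ⟨((v : ℕ) - 1) / 2, h⟩ else v with ha
    set b : Fin N := if h : 2 * (v : ℕ) + 1 < N then ⟨2 * (v : ℕ) + 1, h⟩ else v with hb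
    set c : Fin N := if h : 2 * (v : ℕ) + 2 < N then ⟨2 * (v : ℕ) + 2, h⟩ else v with hc
    have hsub : G.neighborSet v ⊆ {a, b, c} := by
      intro u hu
      rw [SimpleGraph.mem_neighborSet, hG, SimpleGraph.fromRel_adj] at hu
      obtain ⟨hne, hrel⟩ := hu
      have hcases : (u : ℕ) = ((v : ℕ) - 1) / 2 ∨ (u : ℕ) = 2 * (v : ℕ) + 1 ∨
          (u : ℕ) = 2 * (v : ℕ) + 2 := by
        rcases hrel with ⟨h1, h2⟩ | ⟨h1, h2⟩
        · right; omega
        · left; exact h1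
      rcases hcases with h | h | h
      · left
        have hlt : ((v : ℕ) - 1) / 2 < N := h ▸ u.isLt
        rw [ha, dif_pos hlt]
        exact Fin.ext h
      · right; left
        have hlt : 2 * (v : ℕ) + 1 < N := h ▸ u.isLt
        rw [hb, dif_pos hlt]
        exact Fin.ext h
      · right; right
        have hlt : 2 * (v : ℕ) + 2 < N := h ▸ u.isLt
        rw [hc, dif_pos hlt]
        exact Fin.ext h
    calc (G.neighborSet v).ncard ≤ ({a, b, c} : Set (Fin N)).ncard :=
          Set.ncard_le_ncard hsub (Set.toFinite _)
    _ ≤ ({b, c} : Set (Fin N)).ncard + 1 := Set.ncard_insert_le _ _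
    _ ≤ 3 := by
          have h1 := Set.ncard_insert_le b ({c} : Set (Fin N))
          have h2 : ({c} : Set (Fin N)).ncard = 1 := Set.ncard_singleton c
          omega
  -- key numeric inequality
  have hepos : (0 : ℝ) < (e : ℝ) := by
    have h1 : (0 : ℕ) < e := by omega
    exact_mod_cast h1
  have hkey : 8 * (e : ℝ) * R + 3 < 2 ^ e := by
    have h2f : (f : ℝ) + 1 ≤ 2 ^ f := by
      have := Nat.lt_two_pow_self (n := f)
      exact_mod_cast this
    have hfR : (16 * R + 8 : ℝ) ≤ f := hf
    have hf1R : (1 : ℝ) ≤ f := by exact_mod_cast hf1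
    have hpow : (2 : ℝ) ^ e = ((2 : ℝ) ^ f) ^ 2 := by
      rw [he, pow_mul']
    rw [hpow]
    have hfnn : (0 : ℝ) ≤ (f : ℝ) + 1 := by linarith
    have hsq : ((f : ℝ) + 1) ^ 2 ≤ ((2 : ℝ) ^ f) ^ 2 := by
      apply pow_le_pow_left₀ hfnn h2f
    have hecast : ((e : ℕ) : ℝ) = 2 * (f : ℝ) := by rw [he]; push_cast; ring
    rw [hecast]
    nlinarith [mul_nonneg (by linarith : (0:ℝ) ≤ (f:ℝ)) (by linarith : (0:ℝ) ≤ (f:ℝ) - 16 * R - 8)]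
  set L : ℝ := ((2 : ℝ) ^ e - 3) / (8 * e) with hL
  have hRL : R < L := by
    rw [hL, lt_div_iff₀ (by positivity)]
    nlinarith [hkey]
  refine ⟨N, G, ⟨s(vz, v1), hedge⟩, hdeg, ?_⟩
  refine lt_of_lt_of_le hRL ?_
  rw [re]
  apply le_csInf
  · refine ⟨_, fun i => EuclideanSpace.single (0 : Fin 2) ((i : ℕ) : ℝ), ?_, rfl⟩
    intro i j hij
    have h0 : ((i : ℕ) : ℝ) = ((j : ℕ) : ℝ) := by
      simpa using congrArg (fun x : Pt => x 0) hij
    exact Fin.ext (by exact_mod_cast h0)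
  rintro r ⟨ρ, hρ, rfl⟩
  -- minimum pairwise distance
  have hPfin : {d | ∃ u v : Fin N, u ≠ v ∧ d = dist (ρ u) (ρ v)}.Finite := by
    apply Set.Finite.subset ((Set.finite_univ (α := Fin N × Fin N)).image
      (fun p => dist (ρ p.1) (ρ p.2)))
    rintro d ⟨u, v, _, rfl⟩
    exact ⟨(u, v), trivial, rfl⟩
  have hvzv1 : vz ≠ v1 := by
    intro hEq; apply_fun Fin.val at hEq; simp [vz, v1] at hEq
  have hPne : {d | ∃ u v : Fin N, u ≠ v ∧ d = dist (ρ u) (ρ v)}.Nonempty :=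
    ⟨_, vz, v1, hvzv1, rfl⟩
  set m := minP ρ with hm'
  have hmmem : m ∈ {d | ∃ u v : Fin N, u ≠ v ∧ d = dist (ρ u) (ρ v)} :=
    hPne.csInf_mem hPfin
  have hm : 0 < m := by
    obtain ⟨u, v, huv, hd⟩ := hmmem
    rw [hd]
    exact dist_pos.2 fun hE => huv (hρ hE)
  have hmle : ∀ u v : Fin N, u ≠ v → m ≤ dist (ρ u) (ρ v) := fun u v h =>
    csInf_le hPfin.bddBelow ⟨u, v, h, rfl⟩
  -- maximum edge length
  have hEfin : {d | ∃ u v, G.Adj u v ∧ d = dist (ρ u) (ρ v)}.Finite := by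
    apply Set.Finite.subset ((Set.finite_univ (α := Fin N × Fin N)).image
      (fun p => dist (ρ p.1) (ρ p.2)))
    rintro d ⟨u, v, _, rfl⟩
    exact ⟨(u, v), trivial, rfl⟩
  have hEne : {d | ∃ u v, G.Adj u v ∧ d = dist (ρ u) (ρ v)}.Nonempty :=
    ⟨_, vz, v1, hedge, rfl⟩
  set B := maxE G ρ with hB'
  have hBle : ∀ u v, G.Adj u v → dist (ρ u) (ρ v) ≤ B := fun u v h =>
    le_csSup hEfin.bddAbove ⟨u, v, h, rfl⟩
  have hB0 : 0 ≤ B := by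
    obtain ⟨u, v, _, hd⟩ := hEne.csSup_mem hEfin
    rw [hB', maxE, hd]
    exact dist_nonneg
  -- depth claim
  have depth : ∀ j : ℕ, ∀ i : Fin N, (i : ℕ) < 2 ^ (j + 1) - 1 →
      dist (ρ i) (ρ vz) ≤ j * B := by
    intro j
    induction j with
    | zero =>
      intro i hi
      have h0 : i = vz := by
        apply Fin.ext
        norm_num at hi
        show (i : ℕ) = 0
        omega
      rw [h0]
      simp
    | succ j ih =>
      intro i hi
      by_cases h0 : (i : ℕ) = 0
      · have hivz : i = vz := Fin.ext h0
        rw [hivz]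
        simp
        positivity
      · have hpN : ((i : ℕ) - 1) / 2 < N := lt_of_le_of_lt (by omega) i.isLt
        have hadj := hadj_parent i h0 hpN
        have h1 : dist (ρ ⟨((i : ℕ) - 1) / 2, hpN⟩) (ρ i) ≤ B := hBle _ _ hadj
        have h2 : dist (ρ ⟨((i : ℕ) - 1) / 2, hpN⟩) (ρ vz) ≤ j * B := by
          apply ih
          have hp2 : 2 ^ (j + 2) = 2 * 2 ^ (j + 1) := by ring
          have h2j : 2 ≤ 2 ^ (j + 1) := by
            calc (2:ℕ) = 2 ^ 1 := rfl
            _ ≤ 2 ^ (j + 1) := Nat.pow_le_pow_right (by norm_num) (by omega)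
          simp only
          omega
        calc dist (ρ i) (ρ vz) ≤ dist (ρ i) (ρ ⟨((i : ℕ) - 1) / 2, hpN⟩)
              + dist (ρ ⟨((i : ℕ) - 1) / 2, hpN⟩) (ρ vz) := dist_triangle _ _ _
        _ ≤ B + j * B := add_le_add (by rw [dist_comm]; exact h1) h2
        _ = ((j + 1 : ℕ) : ℝ) * B := by push_cast; ring
  have hball : ∀ i : Fin N, dist (ρ i) (ρ vz) ≤ ((2 * e : ℕ) : ℝ) * B := by
    intro i
    apply depth (2 * e) i
    have := i.isLt
    omega
  -- grid counting
  have hgrid := grid_count ρ m (((2 * e : ℕ) : ℝ) * B) vz hm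
    (by positivity) (fun i j hij => hmle i j hij) hball
  have hsq : ((2 : ℝ) ^ e) ^ 2 ≤ (N : ℝ) := by
    have h1 : ((2 : ℝ) ^ e) ^ 2 = (2 : ℝ) ^ (2 * e) := by
      rw [← pow_mul]; ring_nf
    have hcast : (N : ℝ) = 2 ^ (2 * e + 1) - 1 := by
      rw [hN]
      push_cast [Nat.one_le_two_pow]
      ring
    have h2 : (1 : ℝ) ≤ 2 ^ (2 * e) := one_le_pow₀ (by norm_num)
    rw [h1, hcast, pow_succ]
    linarith
  have hKnn : (0 : ℝ) ≤ 4 * (((2 * e : ℕ) : ℝ) * B) / m + 3 := by positivity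
  have h2e : (2 : ℝ) ^ e ≤ 4 * (((2 * e : ℕ) : ℝ) * B) / m + 3 := by
    have hpos : (0 : ℝ) ≤ (2 : ℝ) ^ e := by positivity
    nlinarith [hsq.trans hgrid]
  -- conclude
  have hmul : ((2 : ℝ) ^ e - 3) * m ≤ 8 * (e : ℝ) * B := by
    have h3 : (2 : ℝ) ^ e - 3 ≤ 4 * (((2 * e : ℕ) : ℝ) * B) / m := by linarith
    have h4 := (le_div_iff₀ hm).1 h3
    push_cast at h4
    linarith
  rw [hL, div_le_div_iff₀ (by positivity) hm]
  linarith
end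
end

section
/- For every finite simple graph G with at least one edge, the one-dimensional plane-width (line-width) satisfies pw₁(G) = χ(G) − 1, where χ(G) is the chromatic number. -/
open Real

noncomputable section

variable {V : Type*} [Fintype V]

/-- One-dimensional non-edge-degeneracy. -/
def NED1 (G : SimpleGraph V) (ρ : V → ℝ) : Prop := ∀ ⦃u v⦄, G.Adj u v → ρ u ≠ ρ v

def maxE1 (G : SimpleGraph V) (ρ : V → ℝ) : ℝ :=
  sSup {d | ∃ u v, G.Adj u v ∧ d = |ρ u - ρ v|}

def minE1 (G : SimpleGraph V) (ρ : V → ℝ) : ℝ :=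
  sInf {d | ∃ u v, G.Adj u v ∧ d = |ρ u - ρ v|}

def maxP1 (ρ : V → ℝ) : ℝ := sSup {d | ∃ u v : V, u ≠ v ∧ d = |ρ u - ρ v|}

def minP1 (ρ : V → ℝ) : ℝ := sInf {d | ∃ u v : V, u ≠ v ∧ d = |ρ u - ρ v|}

/-- The one-dimensional dilation coefficient. -/
def dc1 (G : SimpleGraph V) : ℝ :=
  sInf {r | ∃ ρ : V → ℝ, NED1 G ρ ∧ r = maxE1 G ρ / minE1 G ρ}

/-- The one-dimensional plane-width ("line-width"). -/
def pw1 (G : SimpleGraph V) : ℝ :=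
  sInf {r | ∃ ρ : V → ℝ, NED1 G ρ ∧ r = maxP1 ρ / minE1 G ρ}

/-- The one-dimensional resolution coefficient. -/
def re1 (G : SimpleGraph V) : ℝ :=
  sInf {r | ∃ ρ : V → ℝ, Function.Injective ρ ∧ r = maxE1 G ρ / minP1 ρ}

section Aux

variable {V : Type*} [Fintype V] {G : SimpleGraph V}

lemma aux_E_finite (ρ : V → ℝ) :
    {d | ∃ u v, G.Adj u v ∧ d = |ρ u - ρ v|}.Finite := by
  apply Set.Finite.subset (Set.finite_range fun p : V × V => |ρ p.1 - ρ p.2|)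
  rintro d ⟨u, v, -, rfl⟩
  exact ⟨(u, v), rfl⟩

lemma aux_P_finite (ρ : V → ℝ) :
    {d | ∃ u v : V, u ≠ v ∧ d = |ρ u - ρ v|}.Finite := by
  apply Set.Finite.subset (Set.finite_range fun p : V × V => |ρ p.1 - ρ p.2|)
  rintro d ⟨u, v, -, rfl⟩
  exact ⟨(u, v), rfl⟩

lemma aux_exists_adj (hG : G.edgeSet.Nonempty) : ∃ u v : V, G.Adj u v := by
  obtain ⟨e, he⟩ := hG
  induction e with
  | h u v => exact ⟨u, v, he⟩

lemma aux_E_nonempty (hG : G.edgeSet.Nonempty) (ρ : V → ℝ) :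
    {d | ∃ u v, G.Adj u v ∧ d = |ρ u - ρ v|}.Nonempty := by
  obtain ⟨u, v, h⟩ := aux_exists_adj hG
  exact ⟨_, u, v, h, rfl⟩

lemma aux_minE1_mem (hG : G.edgeSet.Nonempty) (ρ : V → ℝ) :
    minE1 G ρ ∈ {d | ∃ u v, G.Adj u v ∧ d = |ρ u - ρ v|} :=
  Set.Nonempty.csInf_mem (aux_E_nonempty hG ρ) (aux_E_finite ρ)

lemma aux_minE1_pos (hG : G.edgeSet.Nonempty) {ρ : V → ℝ} (hρ : NED1 G ρ) :
    0 < minE1 G ρ := by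
  obtain ⟨u, v, h, he⟩ := aux_minE1_mem hG ρ
  rw [he]
  exact abs_pos.2 (sub_ne_zero.2 (hρ h))

lemma aux_minE1_le (hG : G.edgeSet.Nonempty) (ρ : V → ℝ) {u v : V} (h : G.Adj u v) :
    minE1 G ρ ≤ |ρ u - ρ v| :=
  csInf_le (aux_E_finite ρ).bddBelow ⟨u, v, h, rfl⟩

lemma aux_le_maxP1 (ρ : V → ℝ) {u v : V} (h : u ≠ v) :
    |ρ u - ρ v| ≤ maxP1 ρ :=
  le_csSup (aux_P_finite ρ).bddAbove ⟨u, v, h, rfl⟩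

lemma aux_maxP1_nonneg (hG : G.edgeSet.Nonempty) (ρ : V → ℝ) : 0 ≤ maxP1 ρ := by
  obtain ⟨u, v, h⟩ := aux_exists_adj hG
  exact le_trans (abs_nonneg _) (aux_le_maxP1 ρ h.ne)

/-- The key lower bound: every representation has ratio at least χ - 1. -/
lemma aux_lower (hG : G.edgeSet.Nonempty) {ρ : V → ℝ} (hρ : NED1 G ρ) :
    (G.chromaticNumber.toNat : ℝ) - 1 ≤ maxP1 ρ / minE1 G ρ := by
  have hm : 0 < minE1 G ρ := aux_minE1_pos hG hρ
  set m := minE1 G ρ with hmdef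
  obtain ⟨u₀, v₀, hadj⟩ := aux_exists_adj hG
  haveI : Nonempty V := ⟨u₀⟩
  -- min and max of ρ
  obtain ⟨w, -, hw⟩ := Finset.exists_min_image Finset.univ ρ ⟨u₀, Finset.mem_univ u₀⟩
  obtain ⟨z, -, hz⟩ := Finset.exists_max_image Finset.univ ρ ⟨u₀, Finset.mem_univ u₀⟩
  simp only [Finset.mem_univ, true_implies] at hw hz
  -- the floor coloring
  set c : V → ℕ := fun v => (⌊(ρ v - ρ w) / m⌋).toNat with hc
  have hfloor_nonneg : ∀ v, (0 : ℤ) ≤ ⌊(ρ v - ρ w) / m⌋ := fun v =>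
    Int.floor_nonneg.2 (div_nonneg (sub_nonneg.2 (hw v)) hm.le)
  have hckey : ∀ u v : V, ρ u + m ≤ ρ v → c u < c v := by
    intro u v huv
    have h1 : (ρ u - ρ w) / m + 1 ≤ (ρ v - ρ w) / m := by
      rw [div_add' _ _ _ hm.ne']
      apply div_le_div_of_nonneg_right ?_ hm.le
      linarith
    have h2 : ⌊(ρ u - ρ w) / m⌋ + 1 ≤ ⌊(ρ v - ρ w) / m⌋ := by
      have := Int.floor_le_floor h1
      rwa [Int.floor_add_one] at this
    have := hfloor_nonneg u
    have := hfloor_nonneg v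
    simp only [hc]
    omega
  have hproper : ∀ ⦃u v⦄, G.Adj u v → c u ≠ c v := by
    intro u v h
    have hme : m ≤ |ρ u - ρ v| := aux_minE1_le hG ρ h
    rcases abs_cases (ρ u - ρ v) with ⟨he, -⟩ | ⟨he, -⟩
    · exact (hckey v u (by linarith)).ne'
    · exact (hckey u v (by linarith)).ne
  have hcz : ∀ v, c v ≤ c z := by
    intro v
    have h1 : ⌊(ρ v - ρ w) / m⌋ ≤ ⌊(ρ z - ρ w) / m⌋ :=
      Int.floor_le_floor (div_le_div_of_nonneg_right (by linarith [hz v]) hm.le)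
    simp only [hc]
    omega
  -- G is colorable with c z + 1 colors
  have hcol : G.Colorable (c z + 1) := by
    refine ⟨SimpleGraph.Coloring.mk (fun v => (⟨c v, Nat.lt_succ_of_le (hcz v)⟩ : Fin (c z + 1)))
      ?_⟩
    intro u v h hcc
    exact hproper h (by simpa using congrArg Fin.val hcc)
  have hk : G.chromaticNumber.toNat ≤ c z + 1 := by
    have h1 := hcol.chromaticNumber_le
    have h2 : G.chromaticNumber ≠ ⊤ := by
      intro ht
      rw [ht] at h1
      exact (ENat.top_ne_coe _) (le_antisymm h1 le_top)
    have h3 := ENat.toNat_le_toNat h1 (ENat.coe_ne_top _)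
    rwa [ENat.toNat_coe] at h3
  -- c z ≤ (ρ z - ρ w) / m ≤ maxP1 ρ / m
  have hczle : (c z : ℝ) ≤ (ρ z - ρ w) / m := by
    have h1 : ((c z : ℤ) : ℝ) ≤ (ρ z - ρ w) / m := by
      rw [hc]
      rw [Int.toNat_of_nonneg (hfloor_nonneg z)]
      exact Int.floor_le _
    exact_mod_cast h1
  have hzwle : ρ z - ρ w ≤ maxP1 ρ := by
    rcases eq_or_ne z w with rfl | hne
    · simpa using aux_maxP1_nonneg hG ρ
    · calc ρ z - ρ w ≤ |ρ z - ρ w| := le_abs_self _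
        _ ≤ maxP1 ρ := aux_le_maxP1 ρ hne
  have : (c z : ℝ) ≤ maxP1 ρ / m :=
    hczle.trans (div_le_div_of_nonneg_right hzwle hm.le)
  have hkR : (G.chromaticNumber.toNat : ℝ) ≤ (c z : ℝ) + 1 := by exact_mod_cast hk
  linarith

/-- The upper bound: the canonical coloring representation has ratio exactly χ - 1. -/
lemma aux_upper (hG : G.edgeSet.Nonempty) :
    ∃ ρ : V → ℝ, NED1 G ρ ∧ maxP1 ρ / minE1 G ρ = (G.chromaticNumber.toNat : ℝ) - 1 := by
  set k := G.chromaticNumber.toNat with hk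
  have hcol : G.Colorable k := G.colorable_chromaticNumber_of_fintype
  obtain ⟨C⟩ := hcol
  obtain ⟨u₀, v₀, hadj⟩ := aux_exists_adj hG
  have hk2 : 2 ≤ k := by
    by_contra h
    push_neg at h
    interval_cases k
    · exact (C u₀).elim0
    · have := C.valid hadj
      exact this (Subsingleton.elim _ _)
  set ρ : V → ℝ := fun v => ((C v : ℕ) : ℝ) with hρ
  have hned : NED1 G ρ := by
    intro u v h he
    apply C.valid h
    have : ((C u : ℕ) : ℝ) = ((C v : ℕ) : ℝ) := he
    exact Fin.ext (by exact_mod_cast this)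
  refine ⟨ρ, hned, ?_⟩
  have hminE : 1 ≤ minE1 G ρ := by
    apply le_csInf (aux_E_nonempty hG ρ)
    rintro d ⟨u, v, h, rfl⟩
    have hne : ((C u : ℕ) : ℤ) ≠ ((C v : ℕ) : ℤ) := by
      intro hc
      exact C.valid h (Fin.ext (by exact_mod_cast hc))
    have h1 : (1 : ℤ) ≤ |((C u : ℕ) : ℤ) - ((C v : ℕ) : ℤ)| :=
      Int.one_le_abs (sub_ne_zero.2 hne)
    have h2 : ((1 : ℤ) : ℝ) ≤ ((|((C u : ℕ) : ℤ) - ((C v : ℕ) : ℤ)| : ℤ) : ℝ) := by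
      exact_mod_cast h1
    push_cast at h2
    convert h2 using 2
  have hmaxP : maxP1 ρ ≤ (k : ℝ) - 1 := by
    refine csSup_le ⟨_, ⟨u₀, v₀, hadj.ne, rfl⟩⟩ ?_
    rintro d ⟨u, v, -, rfl⟩
    have hb : ∀ x : V, ((C x : ℕ) : ℝ) ≤ (k : ℝ) - 1 := by
      intro x
      have h1 : (C x : ℕ) ≤ k - 1 := Nat.le_pred_of_lt (C x).isLt
      have h2 : ((C x : ℕ) : ℝ) ≤ ((k - 1 : ℕ) : ℝ) := Nat.cast_le.2 h1
      rwa [Nat.cast_sub (by omega), Nat.cast_one] at h2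
    have h0 : ∀ x : V, (0 : ℝ) ≤ ((C x : ℕ) : ℝ) := fun x => Nat.cast_nonneg _
    rcases abs_cases (ρ u - ρ v) with ⟨he, -⟩ | ⟨he, -⟩ <;>
      · rw [he]
        simp only [hρ]
        have := hb u; have := hb v; have := h0 u; have := h0 v
        linarith
  have hub : maxP1 ρ / minE1 G ρ ≤ (k : ℝ) - 1 :=
    (div_le_self (aux_maxP1_nonneg hG ρ) hminE).trans hmaxP
  exact le_antisymm hub (aux_lower hG hned)

end Aux

/-- The one-dimensional plane-width equals the chromatic number minus one. -/
theorem stmt_9 {V : Type*} [Fintype V] (G : SimpleGraph V) (hG : G.edgeSet.Nonempty) :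
    pw1 G = (G.chromaticNumber.toNat : ℝ) - 1 := by
  set S := {r | ∃ ρ : V → ℝ, NED1 G ρ ∧ r = maxP1 ρ / minE1 G ρ} with hS
  obtain ⟨ρ, hned, hρ⟩ := aux_upper hG
  have hlb : ∀ r ∈ S, (G.chromaticNumber.toNat : ℝ) - 1 ≤ r := by
    rintro r ⟨ρ', hned', rfl⟩
    exact aux_lower hG hned'
  have hmem : (G.chromaticNumber.toNat : ℝ) - 1 ∈ S := ⟨ρ, hned, hρ.symm⟩
  exact le_antisymm (csInf_le ⟨_, hlb⟩ hmem) (le_csInf ⟨_, hmem⟩ hlb)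
end
end

section
/- The bandwidth of the Cartesian product of two paths satisfies bw(P_m □ P_n) ≥ min{m,n}, while the resolution coefficient of P_m □ P_n equals 1 (witnessed by the integer grid placement); hence the resolution coefficient is not bounded below by any increasing unbounded function of the bandwidth. -/
open Real

noncomputable section

variable {V : Type*} [Fintype V]

/-- The bandwidth of a graph: minimum over bijections `φ : V ≃ {1,…,n}` of the
maximum of `|φ u - φ v|` over edges `uv`. -/
def bw (G : SimpleGraph V) : ℕ :=
  sInf {k : ℕ | ∃ φ : V ≃ Fin (Fintype.card V),
    ∀ u v, G.Adj u v → (((φ u : ℕ) : ℤ) - ((φ v : ℕ) : ℤ)).natAbs ≤ k}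

/-- The grid graph `P_m □ P_n`: the Cartesian product of two paths. -/
def gridGraph (m n : ℕ) : SimpleGraph (Fin m × Fin n) :=
  SimpleGraph.fromRel (fun p q =>
    (p.1 = q.1 ∧ (p.2 : ℕ) + 1 = (q.2 : ℕ)) ∨ (p.2 = q.2 ∧ (p.1 : ℕ) + 1 = (q.1 : ℕ)))

section Aux

lemma ivt_nat (P : ℕ → Prop) {a b : ℕ} (h : a < b) (ha : P a) (hb : ¬ P b) :
    ∃ j, a ≤ j ∧ j < b ∧ P j ∧ ¬ P (j+1) := by
  induction b with
  | zero => omega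
  | succ b ih =>
    by_cases hPb : P b
    · rcases Nat.lt_or_ge a b with h' | h'
      · exact ⟨b, by omega, by omega, hPb, hb⟩
      · have : a = b := by omega
        exact ⟨b, by omega, by omega, hPb, hb⟩
    · rcases Nat.lt_or_ge a b with h' | h'
      · obtain ⟨j, h1, h2, h3, h4⟩ := ih h' hPb
        exact ⟨j, h1, by omega, h3, h4⟩
      · have : a = b := by omega
        exact absurd ha ((this ▸ hPb))

lemma grid_adj_iff {m n : ℕ} {p q : Fin m × Fin n} :
    (gridGraph m n).Adj p q ↔ p ≠ q ∧
      ((p.1 = q.1 ∧ (p.2 : ℕ) + 1 = (q.2 : ℕ)) ∨ (p.2 = q.2 ∧ (p.1 : ℕ) + 1 = (q.1 : ℕ)) ∨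
       (q.1 = p.1 ∧ (q.2 : ℕ) + 1 = (p.2 : ℕ)) ∨ (q.2 = p.2 ∧ (q.1 : ℕ) + 1 = (p.1 : ℕ))) := by
  simp [gridGraph, SimpleGraph.fromRel_adj]
  tauto

end Aux
lemma grid_adj_swap {m n : ℕ} {u v : Fin n × Fin m} (h : (gridGraph n m).Adj u v) :
    (gridGraph m n).Adj (u.2, u.1) (v.2, v.1) := by
  rw [grid_adj_iff] at h ⊢
  obtain ⟨hne, h⟩ := h
  refine ⟨fun hh => hne ?_, by tauto⟩
  simp only [Prod.ext_iff] at hh ⊢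
  tauto

lemma aux_row {m n k t : ℕ} (hn : 2 ≤ n) (ψ : Fin m × Fin n → ℕ)
    (hinj : Function.Injective ψ)
    (hgap : ∀ u v, (gridGraph m n).Adj u v → ψ v ≤ ψ u + k)
    (i₀ : Fin m) (hrow : ∀ j, ψ (i₀, j) ≤ t)
    (hnocol : ∀ j : Fin n, ∃ i, t ≤ ψ (i, j)) : n ≤ k := by
  classical
  set B : Finset (Fin m × Fin n) :=
    Finset.univ.filter (fun w => t ≤ ψ w ∧ ∃ u, ψ u < t ∧ (gridGraph m n).Adj u w) with hB
  have hBk : B.card ≤ k := by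
    have hco : B.card ≤ (Finset.Ico t (t + k)).card := by
      apply Finset.card_le_card_of_injOn ψ
      · intro w hw
        rw [Finset.mem_coe, hB, Finset.mem_filter] at hw
        obtain ⟨-, hw1, u, hu, hadj⟩ := hw
        have := hgap u w hadj
        exact Finset.mem_coe.mpr (Finset.mem_Ico.mpr ⟨hw1, by omega⟩)
      · exact fun a _ b _ h => hinj h
    simpa using hco
  have claim : ∀ j : Fin n, ∃ w, w ∈ B ∧ w.2 = j := by
    intro j
    set g : ℕ → ℕ := fun i => if h : i < m then ψ (⟨i, h⟩, j) else t with hg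
    have hgval : ∀ (i : ℕ) (h : i < m), g i = ψ (⟨i, h⟩, j) := by
      intro i h; simp [hg, dif_pos h]
    by_cases hlt : ψ (i₀, j) < t
    · obtain ⟨i₁, hi₁⟩ := hnocol j
      have hg0 : g (i₀ : ℕ) < t := by rw [hgval _ i₀.isLt]; simpa using hlt
      have hg1 : ¬ g (i₁ : ℕ) < t := by rw [hgval _ i₁.isLt]; simp; omega
      have hne : (i₀ : ℕ) ≠ (i₁ : ℕ) := by
        intro h
        have : i₀ = i₁ := Fin.ext h
        rw [this] at hlt; omega
      rcases Nat.lt_or_ge (i₀ : ℕ) (i₁ : ℕ) with hlt' | hge'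
      · obtain ⟨a, ha1, ha2, ha3, ha4⟩ := ivt_nat (fun i => g i < t) hlt' hg0 hg1
        have ham : a + 1 < m := by have := i₁.isLt; omega
        have ham' : a < m := by omega
        refine ⟨(⟨a+1, ham⟩, j), ?_, rfl⟩
        rw [hB, Finset.mem_filter]
        refine ⟨Finset.mem_univ _, by rw [← hgval _ ham]; omega,
          (⟨a, ham'⟩, j), by rw [← hgval _ ham']; exact ha3, ?_⟩
        rw [grid_adj_iff]
        exact ⟨by simp [Prod.ext_iff, Fin.ext_iff], Or.inr (Or.inl ⟨rfl, by simp⟩)⟩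
      · have hlt' : (i₁ : ℕ) < (i₀ : ℕ) := by omega
        obtain ⟨a, ha1, ha2, ha3, ha4⟩ :=
          ivt_nat (fun i => ¬ g i < t) hlt' hg1 (not_not_intro hg0)
        rw [not_not] at ha4
        have ham : a + 1 < m := by have := i₀.isLt; omega
        have ham' : a < m := by omega
        refine ⟨(⟨a, ham'⟩, j), ?_, rfl⟩
        rw [hB, Finset.mem_filter]
        refine ⟨Finset.mem_univ _, by rw [← hgval _ ham']; omega,
          (⟨a+1, ham⟩, j), by rw [← hgval _ ham]; exact ha4, ?_⟩
        rw [grid_adj_iff]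
        exact ⟨by simp [Prod.ext_iff, Fin.ext_iff], Or.inr (Or.inr (Or.inr ⟨rfl, by simp⟩))⟩
    · have heq : ψ (i₀, j) = t := by have := hrow j; omega
      by_cases hj : (j : ℕ) + 1 < n
      · have hune : ψ (i₀, ⟨(j : ℕ) + 1, hj⟩) ≠ ψ (i₀, j) := by
          intro h
          have := hinj h
          simp [Prod.ext_iff, Fin.ext_iff] at this
        have hult : ψ (i₀, ⟨(j : ℕ) + 1, hj⟩) < t := by
          have := hrow ⟨(j : ℕ) + 1, hj⟩; omega
        refine ⟨(i₀, j), ?_, rfl⟩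
        rw [hB, Finset.mem_filter]
        refine ⟨Finset.mem_univ _, by omega, (i₀, ⟨(j : ℕ) + 1, hj⟩), hult, ?_⟩
        rw [grid_adj_iff]
        exact ⟨by simp [Prod.ext_iff, Fin.ext_iff], Or.inr (Or.inr (Or.inl ⟨rfl, by simp⟩))⟩
      · have hj1 : 1 ≤ (j : ℕ) := by have := j.isLt; omega
        have hjm : (j : ℕ) - 1 < n := by omega
        have hune : ψ (i₀, ⟨(j : ℕ) - 1, hjm⟩) ≠ ψ (i₀, j) := by
          intro h
          have := hinj h
          simp [Prod.ext_iff, Fin.ext_iff] at this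
          omega
        have hult : ψ (i₀, ⟨(j : ℕ) - 1, hjm⟩) < t := by
          have := hrow ⟨(j : ℕ) - 1, hjm⟩; omega
        refine ⟨(i₀, j), ?_, rfl⟩
        rw [hB, Finset.mem_filter]
        refine ⟨Finset.mem_univ _, by omega, (i₀, ⟨(j : ℕ) - 1, hjm⟩), hult, ?_⟩
        rw [grid_adj_iff]
        refine ⟨by simp [Prod.ext_iff, Fin.ext_iff]; omega,
          Or.inl ⟨rfl, by simp; omega⟩⟩
  choose f hf using claim
  have hcard : (Finset.univ : Finset (Fin n)).card ≤ B.card := by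
    apply Finset.card_le_card_of_injOn f (fun j _ => (hf j).1)
    intro a _ b _ h
    have := congrArg Prod.snd h
    rwa [(hf a).2, (hf b).2] at this
  simpa using hcard.trans hBk

lemma grid_bw_lb {m n k : ℕ} (hm : 2 ≤ m) (hn : 2 ≤ n)
    (ψ : Fin m × Fin n → ℕ) (hinj : Function.Injective ψ)
    (hgap : ∀ u v, (gridGraph m n).Adj u v → ψ v ≤ ψ u + k) :
    min m n ≤ k := by
  classical
  set FL : ℕ → Prop :=
    fun t => (∃ i, ∀ j, ψ (i, j) < t) ∨ (∃ j, ∀ i, ψ (i, j) < t) with hFL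
  have hex : ∃ t, FL t :=
    ⟨Finset.univ.sup ψ + 1,
      Or.inl ⟨⟨0, by omega⟩, fun j => Nat.lt_succ_of_le (Finset.le_sup (Finset.mem_univ _))⟩⟩
  set t₁ := sInf {t | FL t} with ht₁def
  have ht₁ : FL t₁ := Nat.sInf_mem hex
  have h2 : 2 ≤ t₁ := by
    by_contra hcon
    push_neg at hcon
    rcases ht₁ with ⟨i, hr⟩ | ⟨j, hc⟩
    · have h0 := hr ⟨0, by omega⟩
      have h1 := hr ⟨1, by omega⟩
      have he : ψ (i, ⟨0, by omega⟩) = ψ (i, ⟨1, by omega⟩) := by omega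
      have := hinj he
      simp [Prod.ext_iff, Fin.ext_iff] at this
    · have h0 := hc ⟨0, by omega⟩
      have h1 := hc ⟨1, by omega⟩
      have he : ψ (⟨0, by omega⟩, j) = ψ (⟨1, by omega⟩, j) := by omega
      have := hinj he
      simp [Prod.ext_iff, Fin.ext_iff] at this
  have hnf : ¬ FL (t₁ - 1) := by
    have h' : t₁ - 1 < sInf {t | FL t} := by rw [← ht₁def]; omega
    exact Nat.notMem_of_lt_sInf h' 
  have hnorow : ∀ i : Fin m, ∃ j, t₁ - 1 ≤ ψ (i, j) := by
    intro i; by_contra h; push_neg at h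
    exact hnf (Or.inl ⟨i, h⟩)
  have hnocol : ∀ j : Fin n, ∃ i, t₁ - 1 ≤ ψ (i, j) := by
    intro j; by_contra h; push_neg at h
    exact hnf (Or.inr ⟨j, h⟩)
  rcases ht₁ with ⟨i₀, hr⟩ | ⟨j₀, hc⟩
  · have hnk : n ≤ k :=
      aux_row (t := t₁ - 1) hn ψ hinj hgap i₀ (fun j => by have := hr j; omega)
        hnocol
    exact (min_le_right m n).trans hnk
  · set ψ' : Fin n × Fin m → ℕ := fun p => ψ (p.2, p.1) with hψ'
    have hinj' : Function.Injective ψ' := by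
      intro a b h
      have := hinj h
      rw [Prod.ext_iff] at this ⊢
      simp at this
      exact ⟨this.2, this.1⟩
    have hgap' : ∀ u v, (gridGraph n m).Adj u v → ψ' v ≤ ψ' u + k :=
      fun u v h => hgap _ _ (grid_adj_swap h)
    have hmk : m ≤ k :=
      aux_row (t := t₁ - 1) hm ψ' hinj' hgap' j₀ (fun i => by have := hc i; simp [hψ']; omega)
        hnorow
    exact (min_le_left m n).trans hmk
lemma grid_bw (m n : ℕ) (hm : 2 ≤ m) (hn : 2 ≤ n) : min m n ≤ bw (gridGraph m n) := by
  classical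
  unfold bw
  have hne : {k : ℕ | ∃ φ : (Fin m × Fin n) ≃ Fin (Fintype.card (Fin m × Fin n)),
      ∀ u v, (gridGraph m n).Adj u v → (((φ u : ℕ) : ℤ) - ((φ v : ℕ) : ℤ)).natAbs ≤ k}.Nonempty := by
    refine ⟨Fintype.card (Fin m × Fin n), Fintype.equivFin _, fun u v _ => ?_⟩
    have h1 := (Fintype.equivFin (Fin m × Fin n) u).isLt
    have h2 := (Fintype.equivFin (Fin m × Fin n) v).isLt
    omega
  have hmem := Nat.sInf_mem hne
  obtain ⟨φ, hφ⟩ := hmem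
  apply grid_bw_lb hm hn (fun p => (φ p : ℕ))
  · intro a b h
    exact φ.injective (Fin.ext h)
  · intro u v h
    have := hφ u v h
    omega

lemma sq_ge_one_of_ne {a b : ℕ} (h : a ≠ b) : 1 ≤ ((a : ℝ) - b) ^ 2 := by
  have h' : ((a : ℝ) - b) = (((a : ℤ) - b : ℤ) : ℝ) := by push_cast; ring
  rw [h']
  have h2 : 1 ≤ ((a : ℤ) - b) ^ 2 := by
    have : (a : ℤ) - b ≠ 0 := by omega
    rcases lt_or_gt_of_ne this with h3 | h3 <;> nlinarith
  exact_mod_cast h2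

/-- The canonical integer-grid embedding. -/
def gridEmb (m n : ℕ) : Fin m × Fin n → Pt :=
  fun p => (WithLp.equiv 2 (Fin 2 → ℝ)).symm ![((p.1 : ℕ) : ℝ), ((p.2 : ℕ) : ℝ)]

lemma gridEmb_dist {m n : ℕ} (p q : Fin m × Fin n) :
    dist (gridEmb m n p) (gridEmb m n q) =
      Real.sqrt ((((p.1 : ℕ) : ℝ) - ((q.1 : ℕ) : ℝ)) ^ 2
        + (((p.2 : ℕ) : ℝ) - ((q.2 : ℕ) : ℝ)) ^ 2) := by
  rw [EuclideanSpace.dist_eq]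
  congr 1
  rw [Fin.sum_univ_two]
  simp [gridEmb, Real.dist_eq, sq_abs]

lemma gridEmb_inj {m n : ℕ} : Function.Injective (gridEmb m n) := by
  intro p q h
  have h' := (WithLp.equiv 2 (Fin 2 → ℝ)).symm.injective h
  have h0 := congrFun h' 0
  have h1 := congrFun h' 1
  simp at h0 h1
  have e0 : (p.1 : ℕ) = (q.1 : ℕ) := Nat.cast_injective h0
  have e1 : (p.2 : ℕ) = (q.2 : ℕ) := Nat.cast_injective h1
  exact Prod.ext (Fin.ext e0) (Fin.ext e1)

lemma gridEmb_dist_adj {m n : ℕ} {p q : Fin m × Fin n}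
    (h : (gridGraph m n).Adj p q) : dist (gridEmb m n p) (gridEmb m n q) = 1 := by
  rw [gridEmb_dist]
  rw [grid_adj_iff] at h
  obtain ⟨-, h⟩ := h
  rcases h with ⟨h1, h2⟩ | ⟨h1, h2⟩ | ⟨h1, h2⟩ | ⟨h1, h2⟩ <;>
    [(rw [h1]); (rw [h1]); (rw [h1]); (rw [h1])] <;>
    rw [← h2] <;> push_cast <;> ring_nf <;>
    norm_num
lemma grid_edge {m n : ℕ} (hm : 2 ≤ m) (hn : 2 ≤ n) :
    (gridGraph m n).Adj (⟨0, by omega⟩, ⟨0, by omega⟩) (⟨0, by omega⟩, ⟨1, by omega⟩) := by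
  rw [grid_adj_iff]
  refine ⟨by simp [Prod.ext_iff, Fin.ext_iff], Or.inl ⟨rfl, by simp⟩⟩

lemma gridEmb_dist_ge {m n : ℕ} {p q : Fin m × Fin n} (h : p ≠ q) :
    1 ≤ dist (gridEmb m n p) (gridEmb m n q) := by
  rw [gridEmb_dist]
  have hsum : 1 ≤ (((p.1 : ℕ) : ℝ) - ((q.1 : ℕ) : ℝ)) ^ 2
      + (((p.2 : ℕ) : ℝ) - ((q.2 : ℕ) : ℝ)) ^ 2 := by
    have hne : (p.1 : ℕ) ≠ (q.1 : ℕ) ∨ (p.2 : ℕ) ≠ (q.2 : ℕ) := by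
      by_contra hc
      push_neg at hc
      exact h (Prod.ext (Fin.ext hc.1) (Fin.ext hc.2))
    rcases hne with hne | hne
    · nlinarith [sq_ge_one_of_ne hne, sq_nonneg (((p.2 : ℕ) : ℝ) - ((q.2 : ℕ) : ℝ))]
    · nlinarith [sq_ge_one_of_ne hne, sq_nonneg (((p.1 : ℕ) : ℝ) - ((q.1 : ℕ) : ℝ))]
  nlinarith [Real.sq_sqrt (by nlinarith : (0:ℝ) ≤ (((p.1 : ℕ) : ℝ) - ((q.1 : ℕ) : ℝ)) ^ 2
      + (((p.2 : ℕ) : ℝ) - ((q.2 : ℕ) : ℝ)) ^ 2),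
    Real.sqrt_nonneg ((((p.1 : ℕ) : ℝ) - ((q.1 : ℕ) : ℝ)) ^ 2
      + (((p.2 : ℕ) : ℝ) - ((q.2 : ℕ) : ℝ)) ^ 2)]

lemma maxE_gridEmb {m n : ℕ} (hm : 2 ≤ m) (hn : 2 ≤ n) :
    maxE (gridGraph m n) (gridEmb m n) = 1 := by
  have hset : {d | ∃ u v, (gridGraph m n).Adj u v ∧ d = dist (gridEmb m n u) (gridEmb m n v)}
      = {1} := by
    ext d
    constructor
    · rintro ⟨u, v, h, rfl⟩
      exact gridEmb_dist_adj h
    · rintro rfl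
      exact ⟨_, _, grid_edge hm hn, (gridEmb_dist_adj (grid_edge hm hn)).symm⟩
  rw [maxE, hset, csSup_singleton]

lemma minP_gridEmb {m n : ℕ} (hm : 2 ≤ m) (hn : 2 ≤ n) :
    minP (gridEmb m n) = 1 := by
  have h1mem : (1 : ℝ) ∈ {d | ∃ u v : Fin m × Fin n, u ≠ v ∧ d = dist (gridEmb m n u) (gridEmb m n v)} :=
    ⟨_, _, (grid_edge hm hn).ne, (gridEmb_dist_adj (grid_edge hm hn)).symm⟩
  have hlb : ∀ d ∈ {d | ∃ u v : Fin m × Fin n, u ≠ v ∧ d = dist (gridEmb m n u) (gridEmb m n v)},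
      (1 : ℝ) ≤ d := by
    rintro d ⟨u, v, hne, rfl⟩
    exact gridEmb_dist_ge hne
  rw [minP]
  exact le_antisymm (csInf_le ⟨1, hlb⟩ h1mem) (le_csInf ⟨1, h1mem⟩ hlb)

lemma re_ratio_ge {V : Type*} [Fintype V] {G : SimpleGraph V} {u₀ v₀ : V}
    (hedge : G.Adj u₀ v₀) {ρ : V → Pt} (hρ : Function.Injective ρ) :
    1 ≤ maxE G ρ / minP ρ := by
  set PS := {d | ∃ u v : V, u ≠ v ∧ d = dist (ρ u) (ρ v)} with hPS
  set ES := {d | ∃ u v : V, G.Adj u v ∧ d = dist (ρ u) (ρ v)} with hES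
  have hPSfin : PS.Finite := by
    apply Set.Finite.subset (Set.finite_range (fun p : V × V => dist (ρ p.1) (ρ p.2)))
    rintro d ⟨u, v, -, rfl⟩
    exact ⟨(u, v), rfl⟩
  have hESfin : ES.Finite := by
    apply Set.Finite.subset (Set.finite_range (fun p : V × V => dist (ρ p.1) (ρ p.2)))
    rintro d ⟨u, v, -, rfl⟩
    exact ⟨(u, v), rfl⟩
  have hPSne : PS.Nonempty := ⟨_, u₀, v₀, hedge.ne, rfl⟩
  have hESne : ES.Nonempty := ⟨_, u₀, v₀, hedge, rfl⟩
  have hminP_mem : sInf PS ∈ PS := hPSne.csInf_mem hPSfin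
  have hminP_pos : 0 < sInf PS := by
    obtain ⟨u, v, hne, heq⟩ := hminP_mem
    rw [heq]
    exact dist_pos.mpr fun h => hne (hρ h)
  have h1 : sInf PS ≤ dist (ρ u₀) (ρ v₀) := csInf_le hPSfin.bddBelow ⟨u₀, v₀, hedge.ne, rfl⟩
  have h2 : dist (ρ u₀) (ρ v₀) ≤ sSup ES := le_csSup hESfin.bddAbove ⟨u₀, v₀, hedge, rfl⟩
  rw [maxE, minP, ← hPS, ← hES]
  rw [one_le_div hminP_pos]
  exact h1.trans h2

lemma grid_re {m n : ℕ} (hm : 2 ≤ m) (hn : 2 ≤ n) : re (gridGraph m n) = 1 := by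
  have hlb : ∀ r ∈ {r | ∃ ρ : Fin m × Fin n → Pt,
      Function.Injective ρ ∧ r = maxE (gridGraph m n) ρ / minP ρ}, (1 : ℝ) ≤ r := by
    rintro r ⟨ρ, hρ, rfl⟩
    exact re_ratio_ge (grid_edge hm hn) hρ
  have hmem : (1 : ℝ) ∈ {r | ∃ ρ : Fin m × Fin n → Pt,
      Function.Injective ρ ∧ r = maxE (gridGraph m n) ρ / minP ρ} := by
    refine ⟨gridEmb m n, gridEmb_inj, ?_⟩
    rw [maxE_gridEmb hm hn, minP_gridEmb hm hn]
    norm_num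
  rw [re]
  exact le_antisymm (csInf_le ⟨1, hlb⟩ hmem) (le_csInf ⟨1, hmem⟩ hlb)
/-- `bw (P_m □ P_n) ≥ min m n` while `re (P_m □ P_n) = 1`; consequently the
resolution coefficient is not bounded below by any monotone unbounded function of
the bandwidth. -/
theorem stmt_14 :
    (∀ m n : ℕ, 2 ≤ m → 2 ≤ n →
      min m n ≤ bw (gridGraph m n) ∧ re (gridGraph m n) = 1) ∧
    ∀ f : ℕ → ℝ, Monotone f → Filter.Tendsto f Filter.atTop Filter.atTop →
      ∃ m n : ℕ, 2 ≤ m ∧ 2 ≤ n ∧ re (gridGraph m n) < f (bw (gridGraph m n)) := by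
  constructor
  · intro m n hm hn
    exact ⟨grid_bw m n hm hn, grid_re hm hn⟩
  · intro f hmono htop
    obtain ⟨N, hN⟩ := Filter.eventually_atTop.mp (Filter.Tendsto.eventually_ge_atTop htop 2)
    have h2 : 2 ≤ max 2 N := le_max_left _ _
    refine ⟨max 2 N, max 2 N, h2, h2, ?_⟩
    rw [grid_re h2 h2]
    have hbw : N ≤ bw (gridGraph (max 2 N) (max 2 N)) := by
      have := grid_bw (max 2 N) (max 2 N) h2 h2
      rw [min_self] at this
      exact le_trans (le_max_right 2 N) this
    calc (1 : ℝ) < 2 := one_lt_two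
      _ ≤ f N := hN N le_rfl
      _ ≤ f (bw (gridGraph (max 2 N) (max 2 N))) := hmono hbw
end
end

section
/- In any convex quadrilateral in the plane, the longer diagonal is at least √2 times as long as the shortest side. -/
open Real

noncomputable section

variable {V : Type*} [Fintype V]

private lemma comb_lt' (p x y m : ℝ) (hp : 0 ≤ p) (hp1 : p ≤ 1) (hx : m < x) (hy : m < y) :
    m < p * x + (1 - p) * y := by
  rcases lt_or_eq_of_le hp with h | h
  · nlinarith [mul_pos h (sub_pos.2 hx), mul_nonneg (by linarith : (0:ℝ) ≤ 1 - p) (sub_pos.2 hy).le]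
  · rw [← h]; simpa using hy

private lemma key' (t s U W e : ℝ) (ht0 : 0 ≤ t) (ht1 : t ≤ 1) (hs0 : 0 ≤ s) (hs1 : s ≤ 1)
    (hWU : W ≤ U)
    (h1 : U/2 < t^2*U - 2*(t*s)*e + s^2*W)
    (h2 : U/2 < (1-t)^2*U + 2*((1-t)*s)*e + s^2*W)
    (h3 : U/2 < (1-t)^2*U - 2*((1-t)*(1-s))*e + (1-s)^2*W)
    (h4 : U/2 < t^2*U + 2*(t*(1-s))*e + (1-s)^2*W) : False := by
  have L1 := comb_lt' (1-t) _ _ _ (by linarith) (by linarith) h1 h2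
  have L2 := comb_lt' (1-t) _ _ _ (by linarith) (by linarith) h4 h3
  have L3 := comb_lt' (1-s) _ _ _ (by linarith) (by linarith) h1 h4
  have L4 := comb_lt' (1-s) _ _ _ (by linarith) (by linarith) h2 h3
  ring_nf at L1 L2 L3 L4
  nlinarith [L1, L2, L3, L4]

private lemma expand_sq' (u v : Pt) (α β : ℝ) :
    ‖α • u + β • v‖^2 =
      α^2 * ‖u‖^2 + 2*(α*β)*(inner ℝ u v : ℝ) + β^2 * ‖v‖^2 := by
  rw [norm_add_sq_real, norm_smul, norm_smul, real_inner_smul_left, real_inner_smul_right]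
  simp only [Real.norm_eq_abs, mul_pow, sq_abs]
  ring

/-- In a convex quadrilateral `ABCD` (the diagonals `AC` and `BD` cross), the longer
diagonal is at least `√2` times the shortest side. -/
theorem stmt_15 (A B C D : Pt)
    (h : ∃ x, x ∈ openSegment ℝ A C ∧ x ∈ openSegment ℝ B D) :
    Real.sqrt 2 * min (min (dist A B) (dist B C)) (min (dist C D) (dist D A)) ≤
      max (dist A C) (dist B D) := by
  obtain ⟨x, hx1, hx2⟩ := h
  rw [openSegment_eq_image] at hx1 hx2
  obtain ⟨t, ⟨ht0, ht1⟩, hxt⟩ := hx1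
  obtain ⟨s, ⟨hs0, hs1⟩, hxs⟩ := hx2
  simp only at hxt hxs
  set u : Pt := C - A with hu
  set v : Pt := D - B with hv
  set U : ℝ := ‖u‖^2 with hU
  set W : ℝ := ‖v‖^2 with hW
  set e : ℝ := (inner ℝ u v : ℝ) with he
  have hA : A - x = (-t) • u := by rw [← hxt, hu]; module
  have hB : B - x = (-s) • v := by rw [← hxs, hv]; module
  have hC : C - x = (1-t) • u := by rw [← hxt, hu]; module
  have hD : D - x = (1-s) • v := by rw [← hxs, hv]; module
  have hAB : A - B = (-t) • u + s • v := by
    have h' : A - B = (A - x) - (B - x) := by abel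
    rw [h', hA, hB]; module
  have hBC : B - C = (-(1-t)) • u + (-s) • v := by
    have h' : B - C = (B - x) - (C - x) := by abel
    rw [h', hB, hC]; module
  have hCD : C - D = (1-t) • u + (-(1-s)) • v := by
    have h' : C - D = (C - x) - (D - x) := by abel
    rw [h', hC, hD]; module
  have hDA : D - A = t • u + (1-s) • v := by
    have h' : D - A = (D - x) - (A - x) := by abel
    rw [h', hD, hA]; module
  have dAB : dist A B ^ 2 = t^2*U - 2*(t*s)*e + s^2*W := by
    rw [dist_eq_norm, hAB, expand_sq']; ring
  have dBC : dist B C ^ 2 = (1-t)^2*U + 2*((1-t)*s)*e + s^2*W := by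
    rw [dist_eq_norm, hBC, expand_sq']; ring
  have dCD : dist C D ^ 2 = (1-t)^2*U - 2*((1-t)*(1-s))*e + (1-s)^2*W := by
    rw [dist_eq_norm, hCD, expand_sq']; ring
  have dDA : dist D A ^ 2 = t^2*U + 2*(t*(1-s))*e + (1-s)^2*W := by
    rw [dist_eq_norm, hDA, expand_sq']
  have dAC : dist A C ^ 2 = U := by rw [dist_comm, dist_eq_norm, ← hu, hU]
  have dBD : dist B D ^ 2 = W := by rw [dist_comm, dist_eq_norm, ← hv, hW]
  set m := min (min (dist A B) (dist B C)) (min (dist C D) (dist D A)) with hm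
  set M := max (dist A C) (dist B D) with hM
  have hm0 : 0 ≤ m := le_min (le_min dist_nonneg dist_nonneg) (le_min dist_nonneg dist_nonneg)
  have hM0 : 0 ≤ M := le_trans dist_nonneg (le_max_left _ _)
  have hmAB : m ≤ dist A B := le_trans (min_le_left _ _) (min_le_left _ _)
  have hmBC : m ≤ dist B C := le_trans (min_le_left _ _) (min_le_right _ _)
  have hmCD : m ≤ dist C D := le_trans (min_le_right _ _) (min_le_left _ _)
  have hmDA : m ≤ dist D A := le_trans (min_le_right _ _) (min_le_right _ _)
  have keysq : 2 * m^2 ≤ M^2 := by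
    by_contra hcon
    push_neg at hcon
    have hUM : U ≤ M^2 := by
      rw [← dAC]; exact pow_le_pow_left₀ dist_nonneg (le_max_left _ _) 2
    have hWM : W ≤ M^2 := by
      rw [← dBD]; exact pow_le_pow_left₀ dist_nonneg (le_max_right _ _) 2
    have pAB : m^2 ≤ dist A B ^ 2 := pow_le_pow_left₀ hm0 hmAB 2
    have pBC : m^2 ≤ dist B C ^ 2 := pow_le_pow_left₀ hm0 hmBC 2
    have pCD : m^2 ≤ dist C D ^ 2 := pow_le_pow_left₀ hm0 hmCD 2
    have pDA : m^2 ≤ dist D A ^ 2 := pow_le_pow_left₀ hm0 hmDA 2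
    rcases le_total W U with hWU | hUW
    · exact key' t s U W e ht0.le ht1.le hs0.le hs1.le hWU
        (by rw [dAB] at pAB; linarith)
        (by rw [dBC] at pBC; linarith)
        (by rw [dCD] at pCD; linarith)
        (by rw [dDA] at pDA; linarith)
    · exact key' s t W U e hs0.le hs1.le ht0.le ht1.le hUW
        (by rw [dAB] at pAB; linarith)
        (by rw [dDA] at pDA; linarith)
        (by rw [dCD] at pCD; linarith)
        (by rw [dBC] at pBC; linarith)
  calc Real.sqrt 2 * m = Real.sqrt (2 * m^2) := by
        rw [Real.sqrt_mul (by norm_num : (0:ℝ) ≤ 2), Real.sqrt_sq hm0]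
    _ ≤ Real.sqrt (M^2) := Real.sqrt_le_sqrt keysq
    _ = M := Real.sqrt_sq hM0
end
end

section
/- For every n there exists a finite simple graph G with re(G) = √2 that contains K_n as a minor; in particular, graphs with resolution coefficient √2 can have arbitrarily large clique minors (and arbitrarily large genus). -/
open Real

noncomputable section

variable {V : Type*} [Fintype V]

/-- `H` is a minor of `G`: there are disjoint nonempty connected branch sets in `G`,
one for each vertex of `H`, with an edge of `G` between the branch sets of any two
adjacent vertices of `H`. -/
def IsMinor {W V : Type*} (H : SimpleGraph W) (G : SimpleGraph V) : Prop :=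
  ∃ f : W → Set V, (∀ w, (f w).Nonempty) ∧ (∀ w, (G.induce (f w)).Connected) ∧
    (Pairwise fun w w' => Disjoint (f w) (f w')) ∧
    ∀ w w', H.Adj w w' → ∃ a ∈ f w, ∃ b ∈ f w', G.Adj a b

set_option maxHeartbeats 1000000

lemma conc (c b a x : ℝ) (hc : 0 ≤ c) (h1 : 1 ≤ x) (h2 : x ≤ 2) :
    a + b*1 - c*1^2 ≤ a + b*x - c*x^2 ∨ a + b*2 - c*2^2 ≤ a + b*x - c*x^2 := by
  rcases le_total b (c*(x+1)) with h|h
  · right; nlinarith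
  · left; nlinarith

lemma corner111 (A B C : ℝ) (hA : 1 ≤ A) (hA2 : A < 2) (hB : 1 ≤ B) (hB2 : B < 2)
    (hC : 1 ≤ C) (hC2 : C < 2) : 0 < (-1) + 1*C + (-1)*C^2 + 1*B + 1*B*C + (-1)*B^2 + 1*A + 1*A*C + 1*A*B + (-1)*A^2 := by
  nlinarith [mul_nonneg (sub_nonneg.2 hA) (sub_pos.2 hA2).le, mul_nonneg (sub_nonneg.2 hB) (sub_pos.2 hB2).le, mul_nonneg (sub_nonneg.2 hC) (sub_pos.2 hC2).le, mul_nonneg (sub_nonneg.2 hA) (sub_nonneg.2 hB), mul_nonneg (sub_nonneg.2 hB) (sub_nonneg.2 hC), mul_nonneg (sub_nonneg.2 hA) (sub_nonneg.2 hC), mul_pos (sub_pos.2 hA2) (sub_pos.2 hB2), mul_pos (sub_pos.2 hB2) (sub_pos.2 hC2), mul_pos (sub_pos.2 hA2) (sub_pos.2 hC2)]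

lemma corner112 (A B C : ℝ) (hA : 1 ≤ A) (hA2 : A < 2) (hB : 1 ≤ B) (hB2 : B < 2)
    (hC : 1 ≤ C) (hC2 : C < 2) : 0 < (-2) + 2*C + (-1)*C^2 + 2*B + (-1)*B^2 + 2*A*C + 2*A*B + (-2)*A^2 := by
  nlinarith [mul_nonneg (sub_nonneg.2 hA) (sub_pos.2 hA2).le, mul_nonneg (sub_nonneg.2 hB) (sub_pos.2 hB2).le, mul_nonneg (sub_nonneg.2 hC) (sub_pos.2 hC2).le, mul_nonneg (sub_nonneg.2 hA) (sub_nonneg.2 hB), mul_nonneg (sub_nonneg.2 hB) (sub_nonneg.2 hC), mul_nonneg (sub_nonneg.2 hA) (sub_nonneg.2 hC), mul_pos (sub_pos.2 hA2) (sub_pos.2 hB2), mul_pos (sub_pos.2 hB2) (sub_pos.2 hC2), mul_pos (sub_pos.2 hA2) (sub_pos.2 hC2)]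

lemma corner121 (A B C : ℝ) (hA : 1 ≤ A) (hA2 : A < 2) (hB : 1 ≤ B) (hB2 : B < 2)
    (hC : 1 ≤ C) (hC2 : C < 2) : 0 < (-2) + 2*C + (-1)*C^2 + 2*B*C + (-2)*B^2 + 2*A + 2*A*B + (-1)*A^2 := by
  nlinarith [mul_nonneg (sub_nonneg.2 hA) (sub_pos.2 hA2).le, mul_nonneg (sub_nonneg.2 hB) (sub_pos.2 hB2).le, mul_nonneg (sub_nonneg.2 hC) (sub_pos.2 hC2).le, mul_nonneg (sub_nonneg.2 hA) (sub_nonneg.2 hB), mul_nonneg (sub_nonneg.2 hB) (sub_nonneg.2 hC), mul_nonneg (sub_nonneg.2 hA) (sub_nonneg.2 hC), mul_pos (sub_pos.2 hA2) (sub_pos.2 hB2), mul_pos (sub_pos.2 hB2) (sub_pos.2 hC2), mul_pos (sub_pos.2 hA2) (sub_pos.2 hC2)]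

lemma corner122 (A B C : ℝ) (hA : 1 ≤ A) (hA2 : A < 2) (hB : 1 ≤ B) (hB2 : B < 2)
    (hC : 1 ≤ C) (hC2 : C < 2) : 0 < (-4) + 3*C + (-1)*C^2 + 2*B + 1*B*C + (-2)*B^2 + 2*A + 1*A*C + 3*A*B + (-2)*A^2 := by
  nlinarith [mul_nonneg (sub_nonneg.2 hA) (sub_pos.2 hA2).le, mul_nonneg (sub_nonneg.2 hB) (sub_pos.2 hB2).le, mul_nonneg (sub_nonneg.2 hC) (sub_pos.2 hC2).le, mul_nonneg (sub_nonneg.2 hA) (sub_nonneg.2 hB), mul_nonneg (sub_nonneg.2 hB) (sub_nonneg.2 hC), mul_nonneg (sub_nonneg.2 hA) (sub_nonneg.2 hC), mul_pos (sub_pos.2 hA2) (sub_pos.2 hB2), mul_pos (sub_pos.2 hB2) (sub_pos.2 hC2), mul_pos (sub_pos.2 hA2) (sub_pos.2 hC2)]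

lemma corner211 (A B C : ℝ) (hA : 1 ≤ A) (hA2 : A < 2) (hB : 1 ≤ B) (hB2 : B < 2)
    (hC : 1 ≤ C) (hC2 : C < 2) : 0 < (-2) + (-2)*C^2 + 2*B + 2*B*C + (-1)*B^2 + 2*A + 2*A*C + (-1)*A^2 := by
  nlinarith [mul_nonneg (sub_nonneg.2 hA) (sub_pos.2 hA2).le, mul_nonneg (sub_nonneg.2 hB) (sub_pos.2 hB2).le, mul_nonneg (sub_nonneg.2 hC) (sub_pos.2 hC2).le, mul_nonneg (sub_nonneg.2 hA) (sub_nonneg.2 hB), mul_nonneg (sub_nonneg.2 hB) (sub_nonneg.2 hC), mul_nonneg (sub_nonneg.2 hA) (sub_nonneg.2 hC), mul_pos (sub_pos.2 hA2) (sub_pos.2 hB2), mul_pos (sub_pos.2 hB2) (sub_pos.2 hC2), mul_pos (sub_pos.2 hA2) (sub_pos.2 hC2)]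

lemma corner212 (A B C : ℝ) (hA : 1 ≤ A) (hA2 : A < 2) (hB : 1 ≤ B) (hB2 : B < 2)
    (hC : 1 ≤ C) (hC2 : C < 2) : 0 < (-4) + 2*C + (-2)*C^2 + 3*B + 1*B*C + (-1)*B^2 + 2*A + 3*A*C + 1*A*B + (-2)*A^2 := by
  nlinarith [mul_nonneg (sub_nonneg.2 hA) (sub_pos.2 hA2).le, mul_nonneg (sub_nonneg.2 hB) (sub_pos.2 hB2).le, mul_nonneg (sub_nonneg.2 hC) (sub_pos.2 hC2).le, mul_nonneg (sub_nonneg.2 hA) (sub_nonneg.2 hB), mul_nonneg (sub_nonneg.2 hB) (sub_nonneg.2 hC), mul_nonneg (sub_nonneg.2 hA) (sub_nonneg.2 hC), mul_pos (sub_pos.2 hA2) (sub_pos.2 hB2), mul_pos (sub_pos.2 hB2) (sub_pos.2 hC2), mul_pos (sub_pos.2 hA2) (sub_pos.2 hC2)]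

lemma corner221 (A B C : ℝ) (hA : 1 ≤ A) (hA2 : A < 2) (hB : 1 ≤ B) (hB2 : B < 2)
    (hC : 1 ≤ C) (hC2 : C < 2) : 0 < (-4) + 2*C + (-2)*C^2 + 2*B + 3*B*C + (-2)*B^2 + 3*A + 1*A*C + 1*A*B + (-1)*A^2 := by
  nlinarith [mul_nonneg (sub_nonneg.2 hA) (sub_pos.2 hA2).le, mul_nonneg (sub_nonneg.2 hB) (sub_pos.2 hB2).le, mul_nonneg (sub_nonneg.2 hC) (sub_pos.2 hC2).le, mul_nonneg (sub_nonneg.2 hA) (sub_nonneg.2 hB), mul_nonneg (sub_nonneg.2 hB) (sub_nonneg.2 hC), mul_nonneg (sub_nonneg.2 hA) (sub_nonneg.2 hC), mul_pos (sub_pos.2 hA2) (sub_pos.2 hB2), mul_pos (sub_pos.2 hB2) (sub_pos.2 hC2), mul_pos (sub_pos.2 hA2) (sub_pos.2 hC2)]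

lemma corner222 (A B C : ℝ) (hA : 1 ≤ A) (hA2 : A < 2) (hB : 1 ≤ B) (hB2 : B < 2)
    (hC : 1 ≤ C) (hC2 : C < 2) : 0 < (-8) + 4*C + (-2)*C^2 + 4*B + 2*B*C + (-2)*B^2 + 4*A + 2*A*C + 2*A*B + (-2)*A^2 := by
  nlinarith [mul_nonneg (sub_nonneg.2 hA) (sub_pos.2 hA2).le, mul_nonneg (sub_nonneg.2 hB) (sub_pos.2 hB2).le, mul_nonneg (sub_nonneg.2 hC) (sub_pos.2 hC2).le, mul_nonneg (sub_nonneg.2 hA) (sub_nonneg.2 hB), mul_nonneg (sub_nonneg.2 hB) (sub_nonneg.2 hC), mul_nonneg (sub_nonneg.2 hA) (sub_nonneg.2 hC), mul_pos (sub_pos.2 hA2) (sub_pos.2 hB2), mul_pos (sub_pos.2 hB2) (sub_pos.2 hC2), mul_pos (sub_pos.2 hA2) (sub_pos.2 hC2)]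

lemma box_pos (A B C s t r : ℝ) (hA : 1 ≤ A) (hA2 : A < 2) (hB : 1 ≤ B) (hB2 : B < 2)
    (hC : 1 ≤ C) (hC2 : C < 2) (hs : 1 ≤ s) (hs2 : s < 2) (ht : 1 ≤ t) (ht2 : t < 2)
    (hr : 1 ≤ r) (hr2 : r < 2) :
    0 < 4*A*B*C + (A+B-s)*(A+C-t)*(B+C-r) - A*(B+C-r)^2 - B*(A+C-t)^2 - C*(A+B-s)^2 := by
  have e0 : 4*A*B*C + (A+B-s)*(A+C-t)*(B+C-r) - A*(B+C-r)^2 - B*(A+C-t)^2 - C*(A+B-s)^2 = (1*B*t*r + (-1)*B*t^2 + (-1)*B*C*r + 1*B*C*t + (-1)*B^2*t + (-1)*A*r^2 + 1*A*t*r + 1*A*C*r + (-1)*A*C*t + 1*A*B*r + 1*A*B*t + (-1)*A^2*r) + ((-1)*t*r + 1*C*r + 1*C*t + (-1)*C^2 + 1*B*t + 1*B*C + 1*A*r + 1*A*C + (-1)*A*B)*s - C*s^2 := by ring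
  rcases conc C ((-1)*t*r + 1*C*r + 1*C*t + (-1)*C^2 + 1*B*t + 1*B*C + 1*A*r + 1*A*C + (-1)*A*B) (1*B*t*r + (-1)*B*t^2 + (-1)*B*C*r + 1*B*C*t + (-1)*B^2*t + (-1)*A*r^2 + 1*A*t*r + 1*A*C*r + (-1)*A*C*t + 1*A*B*r + 1*A*B*t + (-1)*A^2*r) s (by linarith) hs hs2.le with h1|h1
  · have e1 : (1*B*t*r + (-1)*B*t^2 + (-1)*B*C*r + 1*B*C*t + (-1)*B^2*t + (-1)*A*r^2 + 1*A*t*r + 1*A*C*r + (-1)*A*C*t + 1*A*B*r + 1*A*B*t + (-1)*A^2*r) + ((-1)*t*r + 1*C*r + 1*C*t + (-1)*C^2 + 1*B*t + 1*B*C + 1*A*r + 1*A*C + (-1)*A*B)*1 - C*1^2 = ((-1)*C + 1*C*r + (-1)*C^2 + 1*B*C + (-1)*B*C*r + 1*A*r + (-1)*A*r^2 + 1*A*C + 1*A*C*r + (-1)*A*B + 1*A*B*r + (-1)*A^2*r) + ((-1)*r + 1*C + 1*B + 1*B*r + 1*B*C + (-1)*B^2 + 1*A*r + (-1)*A*C +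 1*A*B)*t - B*t^2 := by ring
    rcases conc B ((-1)*r + 1*C + 1*B + 1*B*r + 1*B*C + (-1)*B^2 + 1*A*r + (-1)*A*C + 1*A*B) ((-1)*C + 1*C*r + (-1)*C^2 + 1*B*C + (-1)*B*C*r + 1*A*r + (-1)*A*r^2 + 1*A*C + 1*A*C*r + (-1)*A*B + 1*A*B*r + (-1)*A^2*r) t (by linarith) ht ht2.le with h2|h2
    · have e2 : ((-1)*C + 1*C*r + (-1)*C^2 + 1*B*C + (-1)*B*C*r + 1*A*r + (-1)*A*r^2 + 1*A*C + 1*A*C*r + (-1)*A*B + 1*A*B*r + (-1)*A^2*r) + ((-1)*r + 1*C + 1*B + 1*B*r + 1*B*C + (-1)*B^2 + 1*A*r + (-1)*A*C + 1*A*B)*1 - B*1^2 = ((-1)*C^2 + 2*B*C + (-1)*B^2) + ((-1) + 1*C + 1*B + (-1)*B*C + 2*A + 1*A*C + 1*A*B + (-1)*A^2)*r - A*r^2 := by ring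
      rcases conc A ((-1) + 1*C + 1*B + (-1)*B*C + 2*A + 1*A*C + 1*A*B + (-1)*A^2) ((-1)*C^2 + 2*B*C + (-1)*B^2) r (by linarith) hr hr2.le with h3|h3
      · have e3 : ((-1)*C^2 + 2*B*C + (-1)*B^2) + ((-1) + 1*C + 1*B + (-1)*B*C + 2*A + 1*A*C + 1*A*B + (-1)*A^2)*1 - A*1^2 = (-1) + 1*C + (-1)*C^2 + 1*B + 1*B*C + (-1)*B^2 + 1*A + 1*A*C + 1*A*B + (-1)*A^2 := by ring
        have hc := corner111 A B C hA hA2 hB hB2 hC hC2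
        linarith
      · have e3 : ((-1)*C^2 + 2*B*C + (-1)*B^2) + ((-1) + 1*C + 1*B + (-1)*B*C + 2*A + 1*A*C + 1*A*B + (-1)*A^2)*2 - A*2^2 = (-2) + 2*C + (-1)*C^2 + 2*B + (-1)*B^2 + 2*A*C + 2*A*B + (-2)*A^2 := by ring
        have hc := corner112 A B C hA hA2 hB hB2 hC hC2
        linarith
    · have e2 : ((-1)*C + 1*C*r + (-1)*C^2 + 1*B*C + (-1)*B*C*r + 1*A*r + (-1)*A*r^2 + 1*A*C + 1*A*C*r + (-1)*A*B + 1*A*B*r + (-1)*A^2*r) + ((-1)*r + 1*C + 1*B + 1*B*r + 1*B*C + (-1)*B^2 + 1*A*r + (-1)*A*C + 1*A*B)*2 - B*2^2 = (1*C + (-1)*C^2 + (-2)*B + 3*B*C + (-2)*B^2 + (-1)*A*C + 1*A*B) + ((-2) + 1*C + 2*B + (-1)*B*C + 3*A + 1*A*C + 1*A*B + (-1)*A^2)*r - A*r^2 := by ring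
      rcases conc A ((-2) + 1*C + 2*B + (-1)*B*C + 3*A + 1*A*C + 1*A*B + (-1)*A^2) (1*C + (-1)*C^2 + (-2)*B + 3*B*C + (-2)*B^2 + (-1)*A*C + 1*A*B) r (by linarith) hr hr2.le with h3|h3
      · have e3 : (1*C + (-1)*C^2 + (-2)*B + 3*B*C + (-2)*B^2 + (-1)*A*C + 1*A*B) + ((-2) + 1*C + 2*B + (-1)*B*C + 3*A + 1*A*C + 1*A*B + (-1)*A^2)*1 - A*1^2 = (-2) + 2*C + (-1)*C^2 + 2*B*C + (-2)*B^2 + 2*A + 2*A*B + (-1)*A^2 := by ring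
        have hc := corner121 A B C hA hA2 hB hB2 hC hC2
        linarith
      · have e3 : (1*C + (-1)*C^2 + (-2)*B + 3*B*C + (-2)*B^2 + (-1)*A*C + 1*A*B) + ((-2) + 1*C + 2*B + (-1)*B*C + 3*A + 1*A*C + 1*A*B + (-1)*A^2)*2 - A*2^2 = (-4) + 3*C + (-1)*C^2 + 2*B + 1*B*C + (-2)*B^2 + 2*A + 1*A*C + 3*A*B + (-2)*A^2 := by ring
        have hc := corner122 A B C hA hA2 hB hB2 hC hC2
        linarith
  · have e1 : (1*B*t*r + (-1)*B*t^2 + (-1)*B*C*r + 1*B*C*t + (-1)*B^2*t + (-1)*A*r^2 + 1*A*t*r + 1*A*C*r + (-1)*A*C*t + 1*A*B*r + 1*A*B*t + (-1)*A^2*r) + ((-1)*t*r + 1*C*r + 1*C*t + (-1)*C^2 + 1*B*t + 1*B*C + 1*A*r + 1*A*C + (-1)*A*B)*2 - C*2^2 = ((-4)*C + 2*C*r + (-2)*C^2 + 2*B*C + (-1)*B*C*r + 2*A*r + (-1)*A*r^2 + 2*A*C + 1*A*C*r + (-2)*A*B + 1*A*B*r + (-1)*A^2*r) + ((-2)*r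 + 2*C + 2*B + 1*B*r + 1*B*C + (-1)*B^2 + 1*A*r + (-1)*A*C + 1*A*B)*t - B*t^2 := by ring
    rcases conc B ((-2)*r + 2*C + 2*B + 1*B*r + 1*B*C + (-1)*B^2 + 1*A*r + (-1)*A*C + 1*A*B) ((-4)*C + 2*C*r + (-2)*C^2 + 2*B*C + (-1)*B*C*r + 2*A*r + (-1)*A*r^2 + 2*A*C + 1*A*C*r + (-2)*A*B + 1*A*B*r + (-1)*A^2*r) t (by linarith) ht ht2.le with h2|h2
    · have e2 : ((-4)*C + 2*C*r + (-2)*C^2 + 2*B*C + (-1)*B*C*r + 2*A*r + (-1)*A*r^2 + 2*A*C + 1*A*C*r + (-2)*A*B + 1*A*B*r + (-1)*A^2*r) + ((-2)*r + 2*C + 2*B + 1*B*r + 1*B*C + (-1)*B^2 + 1*A*r + (-1)*A*C + 1*A*B)*1 - B*1^2 = ((-2)*C + (-2)*C^2 + 1*B + 3*B*C + (-1)*B^2 + 1*A*C + (-1)*A*B) + ((-2) + 2*C + 1*B + (-1)*B*C + 3*A + 1*A*C + 1*A*B + (-1)*A^2)*r - A*r^2 := by ring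
      rcases conc A ((-2) + 2*C + 1*B + (-1)*B*C + 3*A + 1*A*C + 1*A*B + (-1)*A^2) ((-2)*C + (-2)*C^2 + 1*B + 3*B*C + (-1)*B^2 + 1*A*C + (-1)*A*B) r (by linarith) hr hr2.le with h3|h3
      · have e3 : ((-2)*C + (-2)*C^2 + 1*B + 3*B*C + (-1)*B^2 + 1*A*C + (-1)*A*B) + ((-2) + 2*C + 1*B + (-1)*B*C + 3*A + 1*A*C + 1*A*B + (-1)*A^2)*1 - A*1^2 = (-2) + (-2)*C^2 + 2*B + 2*B*C + (-1)*B^2 + 2*A + 2*A*C + (-1)*A^2 := by ring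
        have hc := corner211 A B C hA hA2 hB hB2 hC hC2
        linarith
      · have e3 : ((-2)*C + (-2)*C^2 + 1*B + 3*B*C + (-1)*B^2 + 1*A*C + (-1)*A*B) + ((-2) + 2*C + 1*B + (-1)*B*C + 3*A + 1*A*C + 1*A*B + (-1)*A^2)*2 - A*2^2 = (-4) + 2*C + (-2)*C^2 + 3*B + 1*B*C + (-1)*B^2 + 2*A + 3*A*C + 1*A*B + (-2)*A^2 := by ring
        have hc := corner212 A B C hA hA2 hB hB2 hC hC2
        linarith
    · have e2 : ((-4)*C + 2*C*r + (-2)*C^2 + 2*B*C + (-1)*B*C*r + 2*A*r + (-1)*A*r^2 + 2*A*C + 1*A*C*r + (-2)*A*B + 1*A*B*r + (-1)*A^2*r) + ((-2)*r + 2*C + 2*B + 1*B*r + 1*B*C + (-1)*B^2 + 1*A*r + (-1)*A*C + 1*A*B)*2 - B*2^2 = ((-2)*C^2 + 4*B*C + (-2)*B^2) + ((-4) + 2*C + 2*B + (-1)*B*C + 4*A + 1*A*C + 1*A*B + (-1)*A^2)*r - A*r^2 := by ring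
      rcases conc A ((-4) + 2*C + 2*B + (-1)*B*C + 4*A + 1*A*C + 1*A*B + (-1)*A^2) ((-2)*C^2 + 4*B*C + (-2)*B^2) r (by linarith) hr hr2.le with h3|h3
      · have e3 : ((-2)*C^2 + 4*B*C + (-2)*B^2) + ((-4) + 2*C + 2*B + (-1)*B*C + 4*A + 1*A*C + 1*A*B + (-1)*A^2)*1 - A*1^2 = (-4) + 2*C + (-2)*C^2 + 2*B + 3*B*C + (-2)*B^2 + 3*A + 1*A*C + 1*A*B + (-1)*A^2 := by ring
        have hc := corner221 A B C hA hA2 hB hB2 hC hC2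
        linarith
      · have e3 : ((-2)*C^2 + 4*B*C + (-2)*B^2) + ((-4) + 2*C + 2*B + (-1)*B*C + 4*A + 1*A*C + 1*A*B + (-1)*A^2)*2 - A*2^2 = (-8) + 4*C + (-2)*C^2 + 4*B + 2*B*C + (-2)*B^2 + 4*A + 2*A*C + 2*A*B + (-2)*A^2 := by ring
        have hc := corner222 A B C hA hA2 hB hB2 hC hC2
        linarith


set_option maxHeartbeats 1000000 in
lemma four_points (p : Fin 4 → Pt) (m : ℝ)
    (h : ∀ i j : Fin 4, i ≠ j → m ≤ dist (p i) (p j)) :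
    ∃ i j : Fin 4, i ≠ j ∧ Real.sqrt 2 * m ≤ dist (p i) (p j) := by
  rcases le_or_gt m 0 with hm|hm
  · exact ⟨0, 1, by decide,
      le_trans (mul_nonpos_of_nonneg_of_nonpos (Real.sqrt_nonneg 2) hm) dist_nonneg⟩
  by_contra hcon
  push_neg at hcon
  have hdist : ∀ i j : Fin 4, dist (p i) (p j)^2
      = (p i 0 - p j 0)^2 + (p i 1 - p j 1)^2 := by
    intro i j
    rw [EuclideanSpace.dist_eq, Real.sq_sqrt (by positivity)]
    simp [Fin.sum_univ_two, Real.dist_eq, sq_abs]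
  have hsq2 : Real.sqrt 2 ^ 2 = 2 := Real.sq_sqrt (by norm_num)
  have hd2 : ∀ i j : Fin 4, i ≠ j →
      m^2 ≤ (p i 0 - p j 0)^2 + (p i 1 - p j 1)^2 ∧
      (p i 0 - p j 0)^2 + (p i 1 - p j 1)^2 < 2*m^2 := by
    intro i j hij
    have h1 := h i j hij
    have h2 := hcon i j hij
    constructor
    · rw [← hdist]; exact pow_le_pow_left₀ hm.le h1 2
    · rw [← hdist]
      have : dist (p i) (p j)^2 < (Real.sqrt 2 * m)^2 := by
        apply pow_lt_pow_left₀ h2 dist_nonneg; norm_num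
      calc dist (p i) (p j)^2 < (Real.sqrt 2 * m)^2 := this
        _ = 2*m^2 := by rw [mul_pow, hsq2]
  have hm2 : (0:ℝ) < m^2 := by positivity
  set A := ((p 0 0 - p 3 0)^2 + (p 0 1 - p 3 1)^2)/m^2 with hAdef
  set B := ((p 1 0 - p 3 0)^2 + (p 1 1 - p 3 1)^2)/m^2 with hBdef
  set C := ((p 2 0 - p 3 0)^2 + (p 2 1 - p 3 1)^2)/m^2 with hCdef
  set s := ((p 0 0 - p 1 0)^2 + (p 0 1 - p 1 1)^2)/m^2 with hsdef
  set t := ((p 0 0 - p 2 0)^2 + (p 0 1 - p 2 1)^2)/m^2 with htdef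
  set r := ((p 1 0 - p 2 0)^2 + (p 1 1 - p 2 1)^2)/m^2 with hrdef
  have bnd : ∀ i j : Fin 4, i ≠ j → 1 ≤ ((p i 0 - p j 0)^2 + (p i 1 - p j 1)^2)/m^2 ∧
      ((p i 0 - p j 0)^2 + (p i 1 - p j 1)^2)/m^2 < 2 := by
    intro i j hij
    obtain ⟨h1, h2⟩ := hd2 i j hij
    constructor
    · rw [le_div_iff₀ hm2]; linarith
    · rw [div_lt_iff₀ hm2]; linarith
  have key := box_pos A B C s t r (bnd 0 3 (by decide)).1 (bnd 0 3 (by decide)).2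
    (bnd 1 3 (by decide)).1 (bnd 1 3 (by decide)).2 (bnd 2 3 (by decide)).1 (bnd 2 3 (by decide)).2
    (bnd 0 1 (by decide)).1 (bnd 0 1 (by decide)).2 (bnd 0 2 (by decide)).1 (bnd 0 2 (by decide)).2
    (bnd 1 2 (by decide)).1 (bnd 1 2 (by decide)).2
  have zero : 4*A*B*C + (A+B-s)*(A+C-t)*(B+C-r)
      - A*(B+C-r)^2 - B*(A+C-t)^2 - C*(A+B-s)^2 = 0 := by
    rw [hAdef, hBdef, hCdef, hsdef, htdef, hrdef]
    field_simp
    ring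
  linarith


-- grid infrastructure
def Mn (n : ℕ) : ℕ := (n+2)*(n+2)
def NN (n : ℕ) : ℕ := Mn n * Mn n

lemma Mn_pos (n : ℕ) : 0 < Mn n := by unfold Mn; positivity

def vtx (n : ℕ) (y x : ℕ) : Fin (NN n) :=
  ⟨Mn n * (y % Mn n) + x % Mn n, by
    have h1 := Nat.mod_lt y (Mn_pos n)
    have h2 := Nat.mod_lt x (Mn_pos n)
    unfold NN
    calc Mn n * (y % Mn n) + x % Mn n < Mn n * (y % Mn n) + Mn n := by omega
      _ ≤ Mn n * Mn n := by
          rw [← Nat.mul_succ]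
          exact Nat.mul_le_mul_left _ h1
    ⟩

def rowv {n : ℕ} (v : Fin (NN n)) : ℕ := v.val / Mn n
def colv {n : ℕ} (v : Fin (NN n)) : ℕ := v.val % Mn n

lemma rowv_vtx {n y x : ℕ} (hy : y < Mn n) (hx : x < Mn n) : rowv (vtx n y x) = y := by
  unfold rowv vtx
  simp only [Nat.mod_eq_of_lt hy, Nat.mod_eq_of_lt hx]
  rw [Nat.mul_add_div (Mn_pos n), Nat.div_eq_of_lt hx]
  omega

lemma colv_vtx {n y x : ℕ} (hx : x < Mn n) : colv (vtx n y x) = x := by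
  unfold colv vtx
  simp only [Nat.mod_eq_of_lt hx]
  rw [Nat.mul_add_mod, Nat.mod_eq_of_lt hx]

lemma vtx_ext {n : ℕ} (u v : Fin (NN n)) (h1 : rowv u = rowv v) (h2 : colv u = colv v) :
    u = v := by
  unfold rowv at h1
  unfold colv at h2
  have hu := Nat.div_add_mod u.val (Mn n)
  have hv := Nat.div_add_mod v.val (Mn n)
  rw [h1, h2] at hu
  exact Fin.ext (by omega)

def GG (n : ℕ) : SimpleGraph (Fin (NN n)) where
  Adj u v := u ≠ v ∧ rowv u ≤ rowv v + 1 ∧ rowv v ≤ rowv u + 1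
    ∧ colv u ≤ colv v + 1 ∧ colv v ≤ colv u + 1
  symm := ⟨fun u v ⟨h1,h2,h3,h4,h5⟩ => ⟨h1.symm, h3, h2, h5, h4⟩⟩
  loopless := ⟨fun v h => h.1 rfl⟩

lemma GG_adj {n : ℕ} {u v : Fin (NN n)} : (GG n).Adj u v ↔ (u ≠ v ∧ rowv u ≤ rowv v + 1 ∧ rowv v ≤ rowv u + 1
    ∧ colv u ≤ colv v + 1 ∧ colv v ≤ colv u + 1) := Iff.rfl

-- the standard drawing
def rho0 (n : ℕ) : Fin (NN n) → Pt :=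
  fun v => (WithLp.equiv 2 (Fin 2 → ℝ)).symm ![(rowv v : ℝ), (colv v : ℝ)]

lemma dist_rho0 {n : ℕ} (u v : Fin (NN n)) :
    dist (rho0 n u) (rho0 n v)
      = Real.sqrt (((rowv u : ℝ) - rowv v)^2 + ((colv u : ℝ) - colv v)^2) := by
  rw [EuclideanSpace.dist_eq]
  congr 1
  simp [Fin.sum_univ_two, rho0, Real.dist_eq, sq_abs]

lemma rho0_inj (n : ℕ) : Function.Injective (rho0 n) := by
  intro u v h
  have h0 := congrArg (fun p : Pt => p 0) h
  have h1 := congrArg (fun p : Pt => p 1) h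
  simp [rho0] at h0 h1
  exact vtx_ext u v (by exact_mod_cast h0) (by exact_mod_cast h1)

-- distance helpers on ℝ
lemma nat_sq_one_le (a b : ℕ) (h : a ≠ b) : 1 ≤ ((a:ℝ) - b)^2 := by
  rcases Nat.lt_or_ge a b with hl | hl
  · have : (a:ℝ) + 1 ≤ b := by exact_mod_cast hl
    nlinarith
  · have hlt : b < a := by omega
    have : (b:ℝ) + 1 ≤ a := by exact_mod_cast hlt
    nlinarith

lemma nat_sq_le_one (a b : ℕ) (h1 : a ≤ b + 1) (h2 : b ≤ a + 1) : ((a:ℝ) - b)^2 ≤ 1 := by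
  have c1 : (a:ℝ) ≤ (b:ℝ) + 1 := by exact_mod_cast h1
  have c2 : (b:ℝ) ≤ (a:ℝ) + 1 := by exact_mod_cast h2
  nlinarith


-- finiteness of distance sets
lemma edist_finite (G : SimpleGraph V) (ρ : V → Pt) :
    {d | ∃ u v, G.Adj u v ∧ d = dist (ρ u) (ρ v)}.Finite := by
  apply Set.Finite.subset (Set.finite_range
    (fun p : V × V => dist (ρ p.1) (ρ p.2)))
  rintro d ⟨u, v, _, rfl⟩
  exact ⟨(u, v), rfl⟩

lemma pdist_finite (ρ : V → Pt) :
    {d | ∃ u v : V, u ≠ v ∧ d = dist (ρ u) (ρ v)}.Finite := by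
  apply Set.Finite.subset (Set.finite_range
    (fun p : V × V => dist (ρ p.1) (ρ p.2)))
  rintro d ⟨u, v, _, rfl⟩
  exact ⟨(u, v), rfl⟩

lemma minP_le (ρ : V → Pt) {u v : V} (h : u ≠ v) : minP ρ ≤ dist (ρ u) (ρ v) :=
  csInf_le (Set.Finite.bddBelow (pdist_finite ρ)) ⟨u, v, h, rfl⟩

lemma le_maxE (G : SimpleGraph V) (ρ : V → Pt) {u v : V} (h : G.Adj u v) :
    dist (ρ u) (ρ v) ≤ maxE G ρ :=
  le_csSup (Set.Finite.bddAbove (edist_finite G ρ)) ⟨u, v, h, rfl⟩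

-- positivity of minP for injective ρ on a type with two distinct elements
lemma minP_pos (ρ : V → Pt) (hinj : Function.Injective ρ) (u v : V) (huv : u ≠ v) :
    0 < minP ρ := by
  have hne : {d | ∃ u v : V, u ≠ v ∧ d = dist (ρ u) (ρ v)}.Nonempty := ⟨_, u, v, huv, rfl⟩
  have hmem := Set.Nonempty.csInf_mem hne (pdist_finite ρ)
  obtain ⟨a, b, hab, he⟩ := hmem
  rw [minP, he]
  exact dist_pos.2 fun hc => hab (hinj hc)

lemma Mn_ge4 (n : ℕ) : 4 ≤ Mn n := by unfold Mn; nlinarith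
lemma one_lt_Mn (n : ℕ) : 1 < Mn n := by have := Mn_ge4 n; omega
lemma zero_lt_Mn (n : ℕ) : 0 < Mn n := by have := Mn_ge4 n; omega

def vv (n : ℕ) : Fin 4 → Fin (NN n) := fun i => vtx n (i.val / 2) (i.val % 2)

lemma vv_rc (n : ℕ) (i : Fin 4) :
    rowv (vv n i) = i.val / 2 ∧ colv (vv n i) = i.val % 2 := by
  have h4 := Mn_ge4 n
  have hi := i.isLt
  exact ⟨rowv_vtx (by omega) (by omega), colv_vtx (by omega)⟩

lemma vv_ne (n : ℕ) {i j : Fin 4} (h : i ≠ j) : vv n i ≠ vv n j := by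
  intro hc
  have hri := (vv_rc n i).1
  have hci := (vv_rc n i).2
  have hrj := (vv_rc n j).1
  have hcj := (vv_rc n j).2
  rw [hc, hrj] at hri
  rw [hc, hcj] at hci
  have hi := i.isLt
  have hj := j.isLt
  exact h (Fin.ext (by omega))

lemma vv_adj (n : ℕ) {i j : Fin 4} (h : i ≠ j) : (GG n).Adj (vv n i) (vv n j) := by
  have hri := (vv_rc n i).1
  have hci := (vv_rc n i).2
  have hrj := (vv_rc n j).1
  have hcj := (vv_rc n j).2
  have hi := i.isLt
  have hj := j.isLt
  exact GG_adj.2 ⟨vv_ne n h, by omega, by omega, by omega, by omega⟩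


lemma maxE_rho0 (n : ℕ) : maxE (GG n) (rho0 n) = Real.sqrt 2 := by
  have hmem : Real.sqrt 2 ∈ {d | ∃ u v, (GG n).Adj u v ∧ d = dist (rho0 n u) (rho0 n v)} := by
    refine ⟨vv n 0, vv n 3, vv_adj n (by decide), ?_⟩
    rw [dist_rho0, (vv_rc n 0).1, (vv_rc n 0).2, (vv_rc n 3).1, (vv_rc n 3).2]
    norm_num [show ((0:Fin 4):ℕ) = 0 from rfl, show ((3:Fin 4):ℕ) = 3 from rfl]
  refine le_antisymm (csSup_le ⟨_, hmem⟩ ?_) (le_csSup (Set.Finite.bddAbove (edist_finite _ _)) hmem)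
  rintro d ⟨u, v, hadj, rfl⟩
  obtain ⟨hne, h1, h2, h3, h4⟩ := GG_adj.1 hadj
  rw [dist_rho0]
  have b1 := nat_sq_le_one _ _ h1 h2
  have b2 := nat_sq_le_one _ _ h3 h4
  apply Real.sqrt_le_sqrt
  linarith

lemma minP_rho0 (n : ℕ) : minP (rho0 n) = 1 := by
  have hmem : (1:ℝ) ∈ {d | ∃ u v : Fin (NN n), u ≠ v ∧ d = dist (rho0 n u) (rho0 n v)} := by
    refine ⟨vv n 0, vv n 1, vv_ne n (by decide), ?_⟩
    rw [dist_rho0, (vv_rc n 0).1, (vv_rc n 0).2, (vv_rc n 1).1, (vv_rc n 1).2]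
    norm_num [show ((0:Fin 4):ℕ) = 0 from rfl, show ((1:Fin 4):ℕ) = 1 from rfl]
  refine le_antisymm (csInf_le (Set.Finite.bddBelow (pdist_finite _)) hmem) (le_csInf ⟨_, hmem⟩ ?_)
  rintro d ⟨u, v, hne, rfl⟩
  rw [dist_rho0]
  have hrc : rowv u ≠ rowv v ∨ colv u ≠ colv v := by
    by_contra hc
    push_neg at hc
    exact hne (vtx_ext u v hc.1 hc.2)
  have h1 : (1:ℝ) ≤ ((rowv u : ℝ) - rowv v)^2 + ((colv u : ℝ) - colv v)^2 := by
    rcases hrc with h | h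
    · have := nat_sq_one_le _ _ h
      nlinarith [sq_nonneg ((colv u : ℝ) - colv v)]
    · have := nat_sq_one_le _ _ h
      nlinarith [sq_nonneg ((rowv u : ℝ) - rowv v)]
  calc (1:ℝ) = Real.sqrt 1 := (Real.sqrt_one).symm
    _ ≤ _ := Real.sqrt_le_sqrt h1

lemma re_lb (n : ℕ) (ρ : Fin (NN n) → Pt) (hinj : Function.Injective ρ) :
    Real.sqrt 2 ≤ maxE (GG n) ρ / minP ρ := by
  have hpos : 0 < minP ρ := minP_pos ρ hinj (vv n 0) (vv n 1) (vv_ne n (by decide))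
  rw [le_div_iff₀ hpos]
  obtain ⟨i, j, hij, hd⟩ := four_points (fun i => ρ (vv n i)) (minP ρ)
    (fun i j hij => minP_le ρ (vv_ne n hij))
  calc Real.sqrt 2 * minP ρ ≤ dist (ρ (vv n i)) (ρ (vv n j)) := hd
    _ ≤ maxE (GG n) ρ := le_maxE _ _ (vv_adj n hij)

lemma re_GG (n : ℕ) : re (GG n) = Real.sqrt 2 := by
  have hlb : ∀ r ∈ {r | ∃ ρ : Fin (NN n) → Pt, Function.Injective ρ ∧ r = maxE (GG n) ρ / minP ρ},
      Real.sqrt 2 ≤ r := by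
    rintro r ⟨ρ, hinj, rfl⟩
    exact re_lb n ρ hinj
  have hmem : Real.sqrt 2 ∈ {r | ∃ ρ : Fin (NN n) → Pt, Function.Injective ρ ∧ r = maxE (GG n) ρ / minP ρ} := by
    refine ⟨rho0 n, rho0_inj n, ?_⟩
    rw [maxE_rho0, minP_rho0, div_one]
  exact le_antisymm (csInf_le ⟨Real.sqrt 2, hlb⟩ hmem) (le_csInf ⟨_, hmem⟩ hlb)

-- chain connectivity
lemma chain_conn {W : Type*} (G : SimpleGraph W) (L : ℕ) (q : ℕ → W)
    (h : ∀ k, k < L → G.Adj (q k) (q (k+1))) :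
    (G.induce (q '' Set.Iic L)).Connected := by
  have hmem : ∀ k, k ≤ L → q k ∈ q '' Set.Iic L := fun k hk => ⟨k, hk, rfl⟩
  rw [SimpleGraph.connected_iff]
  refine ⟨?_, ⟨⟨q 0, hmem 0 (Nat.zero_le L)⟩⟩⟩
  have key : ∀ k, ∀ hk : k ≤ L, (G.induce (q '' Set.Iic L)).Reachable
      ⟨q 0, hmem 0 (Nat.zero_le L)⟩ ⟨q k, hmem k hk⟩ := by
    intro k
    induction k with
    | zero => intro _; exact SimpleGraph.Reachable.refl _
    | succ k ih =>
      intro hk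
      refine (ih (Nat.le_of_succ_le hk)).trans (SimpleGraph.Adj.reachable ?_)
      exact h k hk
  rintro ⟨u, hu⟩ ⟨v, hv⟩
  obtain ⟨k, hk, rfl⟩ := hu
  obtain ⟨l, hl, rfl⟩ := hv
  exact (key k hk).symm.trans (key l hl)

-- the branch-path data
def Cc (n a : ℕ) : ℕ := (n+1)*(a+1)
def Ll (n a : ℕ) : ℕ := Cc n a + 3*(n-1-a)

open Classical in
noncomputable def py (n a k : ℕ) : ℕ :=
  if k ≤ Cc n a then
    (if ∃ m, m < a ∧ k = Cc n m + (a - m - 1) then 3*a+1 else 3*a)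
  else 3*a + (k - Cc n a)

def px (n a k : ℕ) : ℕ := if k ≤ Cc n a then k else Cc n a + (k - Cc n a - 1)/3

noncomputable def Q (n a k : ℕ) : Fin (NN n) := vtx n (py n a k) (px n a k)

lemma Cc_gap {n m a : ℕ} (h : m < a) : Cc n m + (n+1) ≤ Cc n a := by
  unfold Cc
  calc (n+1)*(m+1) + (n+1) = (n+1)*(m+2) := by ring
    _ ≤ (n+1)*(a+1) := Nat.mul_le_mul_left _ (by omega)

lemma Cc_le {n a : ℕ} (h : a < n) : Cc n a ≤ (n+1)*n :=
  Nat.mul_le_mul_left _ (by omega)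

lemma Mn_eq (n : ℕ) : Mn n = (n+1)*n + 3*n + 4 := by unfold Mn; ring

lemma py_lt {n a k : ℕ} (ha : a < n) (hk : k ≤ Ll n a) : py n a k < Mn n := by
  have h1 := Cc_le ha
  have h2 := Mn_eq n
  unfold Ll at hk
  unfold py
  split
  · split <;> omega
  · omega

lemma px_lt {n a k : ℕ} (ha : a < n) (hk : k ≤ Ll n a) : px n a k < Mn n := by
  have h1 := Cc_le ha
  have h2 := Mn_eq n
  unfold Ll at hk
  unfold px
  split
  · omega
  · omega

lemma rowv_Q {n a k : ℕ} (ha : a < n) (hk : k ≤ Ll n a) : rowv (Q n a k) = py n a k :=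
  rowv_vtx (py_lt ha hk) (px_lt ha hk)

lemma colv_Q {n a k : ℕ} (ha : a < n) (hk : k ≤ Ll n a) : colv (Q n a k) = px n a k :=
  colv_vtx (px_lt ha hk)

-- no hole at or beyond Cc n a
lemma hole_lt {n m a k : ℕ} (hm : m < a) (hk : k = Cc n m + (a - m - 1)) (ha : a < n) :
    k < Cc n a := by
  have := Cc_gap (n := n) hm
  omega

lemma py_H {n a k : ℕ} (h : k ≤ Cc n a) (hh : ¬∃ m, m < a ∧ k = Cc n m + (a - m - 1)) :
    py n a k = 3*a := by
  unfold py; rw [if_pos h, if_neg hh]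

lemma py_Hhole {n a k : ℕ} (h : k ≤ Cc n a) (hh : ∃ m, m < a ∧ k = Cc n m + (a - m - 1)) :
    py n a k = 3*a+1 := by
  unfold py; rw [if_pos h, if_pos hh]

lemma py_V {n a k : ℕ} (h : Cc n a < k) : py n a k = 3*a + (k - Cc n a) := by
  unfold py; rw [if_neg (by omega)]

lemma px_H {n a k : ℕ} (h : k ≤ Cc n a) : px n a k = k := by
  unfold px; rw [if_pos h]

lemma px_V {n a k : ℕ} (h : Cc n a < k) : px n a k = Cc n a + (k - Cc n a - 1)/3 := by
  unfold px; rw [if_neg (by omega)]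

lemma no_hole_ge {n a k : ℕ} (ha : a < n) (h : Cc n a ≤ k) :
    ¬∃ m, m < a ∧ k = Cc n m + (a - m - 1) := by
  rintro ⟨m, hm, he⟩
  have := hole_lt hm he ha
  omega

lemma py_H_cases {n a k : ℕ} (h : k ≤ Cc n a) : py n a k = 3*a ∨ py n a k = 3*a+1 := by
  by_cases hh : ∃ m, m < a ∧ k = Cc n m + (a - m - 1)
  · right; exact py_Hhole h hh
  · left; exact py_H h hh

-- chain adjacency along the path
lemma Q_chain {n a : ℕ} (ha : a < n) : ∀ k, k < Ll n a →
    (GG n).Adj (Q n a k) (Q n a (k+1)) := by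
  intro k hk
  have hk' : k ≤ Ll n a := hk.le
  have hk1 : k + 1 ≤ Ll n a := hk
  have hr1 := rowv_Q ha hk'
  have hr2 := rowv_Q ha hk1
  have hc1 := colv_Q ha hk'
  have hc2 := colv_Q ha hk1
  have main : (py n a k ≠ py n a (k+1) ∨ px n a k ≠ px n a (k+1))
      ∧ py n a k ≤ py n a (k+1) + 1 ∧ py n a (k+1) ≤ py n a k + 1
      ∧ px n a k ≤ px n a (k+1) + 1 ∧ px n a (k+1) ≤ px n a k + 1 := by
    rcases Nat.lt_or_ge (Cc n a) (k+1) with h1 | h1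
    · rcases Nat.lt_or_ge (Cc n a) k with h2 | h2
      · rw [py_V h2, py_V h1, px_V h2, px_V h1]
        refine ⟨Or.inl ?_, ?_, ?_, ?_, ?_⟩ <;> omega
      · have hkc : k = Cc n a := by omega
        rw [py_H h2 (no_hole_ge ha (by omega)), py_V h1, px_H h2, px_V h1]
        refine ⟨Or.inl ?_, ?_, ?_, ?_, ?_⟩ <;> omega
    · rw [px_H (by omega), px_H h1]
      rcases py_H_cases (n := n) (a := a) (k := k) (by omega) with e1 | e1 <;>
        rcases py_H_cases (n := n) (a := a) (k := k+1) h1 with e2 | e2 <;>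
          rw [e1, e2] <;> exact ⟨Or.inr (by omega), by omega, by omega, by omega, by omega⟩
  refine GG_adj.2 ⟨?_, ?_, ?_, ?_, ?_⟩
  · intro hc
    rw [hc] at hr1 hc1
    rcases main.1 with h | h
    · exact h (hr1.symm.trans hr2)
    · exact h (hc1.symm.trans hc2)
  · rw [hr1, hr2]; exact main.2.1
  · rw [hr1, hr2]; exact main.2.2.1
  · rw [hc1, hc2]; exact main.2.2.2.1
  · rw [hc1, hc2]; exact main.2.2.2.2

lemma Q_ne {n a b k l : ℕ} (hab : a < b) (hb : b < n) (hk : k ≤ Ll n a) (hl : l ≤ Ll n b) :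
    Q n a k ≠ Q n b l := by
  have ha : a < n := lt_trans hab hb
  intro hc
  have hr : py n a k = py n b l := by
    have e1 := rowv_Q ha hk
    have e2 := rowv_Q hb hl
    rw [← e1, ← e2, hc]
  have hx : px n a k = px n b l := by
    have e1 := colv_Q ha hk
    have e2 := colv_Q hb hl
    rw [← e1, ← e2, hc]
  have hgap := Cc_gap (n := n) hab
  unfold Ll at hk hl
  rcases Nat.lt_or_ge (Cc n b) l with h1 | h1
  · rw [px_V h1] at hx
    rcases Nat.lt_or_ge (Cc n a) k with h2 | h2
    · rw [px_V h2] at hx; omega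
    · rw [px_H h2] at hx; omega
  · rcases Nat.lt_or_ge (Cc n a) k with h2 | h2
    · rw [py_V h2] at hr
      rw [px_V h2] at hx
      rw [px_H h1] at hx
      by_cases hh : ∃ m, m < b ∧ l = Cc n m + (b - m - 1)
      · rw [py_Hhole h1 hh] at hr
        obtain ⟨m, hm, he⟩ := hh
        rcases Nat.lt_trichotomy m a with h3 | h3 | h3
        · have := Cc_gap (n := n) h3; omega
        · subst h3; omega
        · have := Cc_gap (n := n) h3; omega
      · rw [py_H h1 hh] at hr
        exact hh ⟨a, hab, by omega⟩
    · rw [px_H h2, px_H h1] at hx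
      rcases py_H_cases (n := n) h2 with e1 | e1 <;>
        rcases py_H_cases (n := n) h1 with e2 | e2 <;> rw [e1, e2] at hr <;> omega

lemma cross_adj {n a b : ℕ} (hab : a < b) (hb : b < n) :
    Cc n a + 3*(b-a) ≤ Ll n a ∧ Cc n a + (b-a) ≤ Ll n b ∧
    (GG n).Adj (Q n a (Cc n a + 3*(b-a))) (Q n b (Cc n a + (b-a))) := by
  have ha : a < n := lt_trans hab hb
  have hgap := Cc_gap (n := n) hab
  have hkL : Cc n a + 3*(b-a) ≤ Ll n a := by unfold Ll; omega
  have hl1 : Cc n a + (b-a) ≤ Cc n b := by omega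
  have hlL : Cc n a + (b-a) ≤ Ll n b := by unfold Ll; omega
  have hpyu : py n a (Cc n a + 3*(b-a)) = 3*b := by rw [py_V (by omega)]; omega
  have hpxu : px n a (Cc n a + 3*(b-a)) = Cc n a + (b - a - 1) := by rw [px_V (by omega)]; omega
  have hnh : ¬∃ m, m < b ∧ Cc n a + (b-a) = Cc n m + (b - m - 1) := by
    rintro ⟨m, hm, he⟩
    rcases Nat.lt_trichotomy m a with h3 | h3 | h3
    · have := Cc_gap (n := n) h3; omega
    · subst h3; omega
    · have := Cc_gap (n := n) h3; omega
  have hpyv : py n b (Cc n a + (b-a)) = 3*b := py_H hl1 hnh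
  have hpxv : px n b (Cc n a + (b-a)) = Cc n a + (b-a) := px_H hl1
  have hru := rowv_Q ha hkL
  have hrv := rowv_Q hb hlL
  have hcu := colv_Q ha hkL
  have hcv := colv_Q hb hlL
  refine ⟨hkL, hlL, GG_adj.2 ⟨?_, ?_, ?_, ?_, ?_⟩⟩
  · intro hc
    rw [hc] at hcu
    rw [hcv, hpxv] at hcu
    rw [hpxu] at hcu
    omega
  · rw [hru, hrv, hpyu, hpyv]; omega
  · rw [hru, hrv, hpyu, hpyv]; omega
  · rw [hcu, hcv, hpxu, hpxv]; omega
  · rw [hcu, hcv, hpxu, hpxv]; omega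


/-- For every `n` there is a graph with resolution coefficient exactly `√2`
containing `K_n` as a minor. -/
theorem stmt_18 : ∀ n : ℕ, ∃ (N : ℕ) (G : SimpleGraph (Fin N)),
    G.edgeSet.Nonempty ∧ re G = Real.sqrt 2 ∧
      IsMinor (⊤ : SimpleGraph (Fin n)) G := by
  intro n
  refine ⟨NN n, GG n, ⟨s(vv n 0, vv n 1), vv_adj n (by decide)⟩, re_GG n, ?_⟩
  refine ⟨fun w => (fun k => Q n w.val k) '' Set.Iic (Ll n w.val), ?_, ?_, ?_, ?_⟩
  · exact fun w => ⟨Q n w.val 0, 0, Nat.zero_le _, rfl⟩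
  · exact fun w => chain_conn (GG n) (Ll n w.val) (fun k => Q n w.val k) (Q_chain w.isLt)
  · intro w w' hww
    have hvne : w.val ≠ w'.val := fun hval => hww (Fin.ext hval)
    rcases Nat.lt_or_ge w.val w'.val with h | h
    · rw [Set.disjoint_left]
      rintro x ⟨k, hk, rfl⟩ ⟨l, hl, he⟩
      exact Q_ne h w'.isLt hk hl he.symm
    · have h' : w'.val < w.val := by omega
      rw [Set.disjoint_right]
      rintro x ⟨k, hk, rfl⟩ ⟨l, hl, he⟩
      exact Q_ne h' w.isLt hk hl he.symm
  · intro w w' hadj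
    have hvne : w.val ≠ w'.val := fun hval => ((SimpleGraph.top_adj _ _).mp hadj) (Fin.ext hval)
    rcases Nat.lt_or_ge w.val w'.val with h | h
    · obtain ⟨hk, hl, hA⟩ := cross_adj h w'.isLt
      exact ⟨_, ⟨_, hk, rfl⟩, _, ⟨_, hl, rfl⟩, hA⟩
    · have h' : w'.val < w.val := by omega
      obtain ⟨hk, hl, hA⟩ := cross_adj h' w.isLt
      exact ⟨_, ⟨_, hl, rfl⟩, _, ⟨_, hk, rfl⟩, hA.symm⟩
end
end
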